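/- arXiv:2202.03839 — 4 statements merged into one kernel-verified Lean document; each statement's English description precedes it below -/
import Mathlib

section
/- Let r ≥ 2 and let (α_1, …, α_r) be a tuple of positive integers with α_1 ≥ 2 and α_r ≥ 2. Then ζ(α_1, …, α_r) + (-1)^r · ζ*(α_r, …, α_1) = ∑_{k=1}^{r-1} (-1)^{k+1} · ζ*(α_k, …, α_1) · ζ(α_{k+1}, …, α_r). -/
open scoped BigOperators

/-- The multiple zeta value `ζ(a₁, …, a_r)`, as a sum over strictly increasing
tuples of positive integers. -/
noncomputable def mz (a : List ℕ) : ℝ :=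
  ∑' k : {k : Fin a.length → ℕ+ // StrictMono k},
    ∏ i, (1 : ℝ) / ((k.1 i : ℕ) : ℝ) ^ a.get i

/-- The multiple zeta-star value `ζ⋆(a₁, …, a_r)`, as a sum over weakly increasing
tuples of positive integers. -/
noncomputable def mzs (a : List ℕ) : ℝ :=
  ∑' k : {k : Fin a.length → ℕ+ // Monotone k},
    ∏ i, (1 : ℝ) / ((k.1 i : ℕ) : ℝ) ^ a.get i

open ENNReal

noncomputable def MW (n : ℕ) (b : Fin n → ℕ) (m : Fin n → ℕ+) : ℝ≥0∞ :=
  ∏ i, (((m i : ℕ) : ℝ≥0∞) ^ (b i))⁻¹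

noncomputable def EZ (n : ℕ) (b : Fin n → ℕ) : ℝ≥0∞ :=
  ∑' m : {m : Fin n → ℕ+ // StrictMono m}, MW n b m.1

noncomputable def EZS (n : ℕ) (b : Fin n → ℕ) : ℝ≥0∞ :=
  ∑' m : {m : Fin n → ℕ+ // Monotone m}, MW n b m.1

lemma pnat_pow_ne_zero (m : ℕ+) (b : ℕ) : (((m : ℕ) : ℝ≥0∞)) ^ b ≠ 0 := by
  apply pow_ne_zero
  simpa using m.ne_zero

lemma MW_ne_top (n : ℕ) (b : Fin n → ℕ) (m : Fin n → ℕ+) : MW n b m ≠ ∞ := by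
  unfold MW
  refine (lt_of_le_of_lt (Finset.prod_le_prod' (g := fun _ => 1) ?_) (by simp)).ne
  intro i _
  rw [ENNReal.inv_le_one]
  exact one_le_pow₀ (by exact_mod_cast m i |>.one_le)

lemma MW_toReal (n : ℕ) (b : Fin n → ℕ) (m : Fin n → ℕ+) :
    (MW n b m).toReal = ∏ i, (1 : ℝ) / ((m i : ℕ) : ℝ) ^ b i := by
  unfold MW
  rw [ENNReal.toReal_prod]
  refine Finset.prod_congr rfl fun i _ => ?_
  rw [ENNReal.toReal_inv, ENNReal.toReal_pow, one_div]
  norm_num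

lemma mz_eq (l : List ℕ) : mz l = (EZ l.length l.get).toReal := by
  unfold mz EZ
  rw [ENNReal.tsum_toReal_eq (fun m => MW_ne_top _ _ _)]
  exact tsum_congr fun m => (MW_toReal _ _ _).symm

lemma mzs_eq (l : List ℕ) : mzs l = (EZS l.length l.get).toReal := by
  unfold mzs EZS
  rw [ENNReal.tsum_toReal_eq (fun m => MW_ne_top _ _ _)]
  exact tsum_congr fun m => (MW_toReal _ _ _).symm

lemma EZ_congr {n n' : ℕ} (h : n = n') (b : Fin n → ℕ) (b' : Fin n' → ℕ)
    (hb : ∀ i : Fin n, b i = b' (Fin.cast h i)) : EZ n b = EZ n' b' := by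
  subst h
  have : b = b' := funext fun i => hb i
  rw [this]

lemma EZS_congr {n n' : ℕ} (h : n = n') (b : Fin n → ℕ) (b' : Fin n' → ℕ)
    (hb : ∀ i : Fin n, b i = b' (Fin.cast h i)) : EZS n b = EZS n' b' := by
  subst h
  have : b = b' := funext fun i => hb i
  rw [this]

lemma mz_ofFn {n : ℕ} (b : Fin n → ℕ) : mz (List.ofFn b) = (EZ n b).toReal := by
  rw [mz_eq]
  congr 1
  exact EZ_congr (by simp) _ _ (fun i => by rw [List.get_ofFn])

lemma mzs_ofFn {n : ℕ} (b : Fin n → ℕ) : mzs (List.ofFn b) = (EZS n b).toReal := by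
  rw [mzs_eq]
  congr 1
  exact EZS_congr (by simp) _ _ (fun i => by rw [List.get_ofFn])

/-- Condition for `U_k` : antitone on the first `k` entries, strictly increasing afterwards
(including the jump from position `k-1` to `k`). -/
def cnd (r k : ℕ) (m : Fin r → ℕ+) : Prop :=
  (∀ i : ℕ, (h' : i + 1 < r) → i + 1 < k → m ⟨i + 1, h'⟩ ≤ m ⟨i, by omega⟩) ∧
  (∀ i : ℕ, (h' : i + 1 < r) → k ≤ i + 1 → m ⟨i, by omega⟩ < m ⟨i + 1, h'⟩)

/-- Condition for the product term `ζ⋆(α_k,…,α_1)·ζ(α_{k+1},…,α_r)` : antitone on the first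
`k` entries, strictly increasing from position `k` on, no constraint between positions
`k-1` and `k`. -/
def cndP (r k : ℕ) (m : Fin r → ℕ+) : Prop :=
  (∀ i : ℕ, (h' : i + 1 < r) → i + 1 < k → m ⟨i + 1, h'⟩ ≤ m ⟨i, by omega⟩) ∧
  (∀ i : ℕ, (h' : i + 1 < r) → k ≤ i → m ⟨i, by omega⟩ < m ⟨i + 1, h'⟩)

noncomputable def UU (r : ℕ) (a : Fin r → ℕ) (k : ℕ) : ℝ≥0∞ :=
  ∑' m : {m : Fin r → ℕ+ // cnd r k m}, MW r a m.1

lemma chain_le {r : ℕ} (m : Fin r → ℕ+) (t : ℕ)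
    (h : ∀ i : ℕ, (h' : i + 1 < r) → i + 1 < t → m ⟨i + 1, h'⟩ ≤ m ⟨i, by omega⟩) :
    ∀ q : ℕ, ∀ p : ℕ, q < t → (hqr : q < r) → (hp : p ≤ q) →
      m ⟨q, hqr⟩ ≤ m ⟨p, Nat.lt_of_le_of_lt hp hqr⟩ := by
  intro q
  induction q with
  | zero =>
    intro p _ _ hp
    obtain rfl : p = 0 := by omega
    exact le_refl _
  | succ q ih =>
    intro p hq hqr hp
    rcases Nat.eq_or_lt_of_le hp with rfl | hp'
    · exact le_refl _
    · exact (h q hqr (by omega)).trans (ih p (by omega) (by omega) (by omega))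

lemma chain_lt {r : ℕ} (m : Fin r → ℕ+) (t : ℕ)
    (h : ∀ i : ℕ, (h' : i + 1 < r) → t ≤ i → m ⟨i, by omega⟩ < m ⟨i + 1, h'⟩) :
    ∀ q : ℕ, ∀ p : ℕ, t ≤ p → (hp : p < q) → (hqr : q < r) →
      m ⟨p, Nat.lt_trans hp hqr⟩ < m ⟨q, hqr⟩ := by
  intro q
  induction q with
  | zero => omega
  | succ q ih =>
    intro p ht hp hqr
    rcases Nat.eq_or_lt_of_le (Nat.lt_succ_iff.mp hp) with rfl | hp'
    · exact h p hqr ht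
    · exact (ih p ht hp' (by omega)).trans (h q hqr (by omega))

lemma cnd_one_iff {r : ℕ} (m : Fin r → ℕ+) : cnd r 1 m ↔ StrictMono m := by
  constructor
  · intro ⟨_, h2⟩ i j hij
    have := chain_lt m 0 (fun i h' _ => h2 i h' (by omega)) j.1 i.1 (by omega) hij j.2
    simpa using this
  · intro hm
    refine ⟨fun i h' hik => by omega, fun i h' _ => hm ?_⟩
    simp [Fin.mk_lt_mk]

lemma cnd_r_iff {r : ℕ} (m : Fin r → ℕ+) :
    cnd r r m ↔ ∀ i : ℕ, (h' : i + 1 < r) → m ⟨i + 1, h'⟩ ≤ m ⟨i, by omega⟩ := by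
  constructor
  · exact fun ⟨h1, _⟩ i h' => h1 i h' (by omega)
  · exact fun h => ⟨fun i h' _ => h i h', fun i h' hk => by omega⟩

lemma cndP_iff {r k : ℕ} (hk : 1 ≤ k) (hkr : k < r) (m : Fin r → ℕ+) :
    cndP r k m ↔ (cnd r k m ∨ cnd r (k + 1) m) := by
  constructor
  · intro ⟨h1, h2⟩
    rcases lt_or_ge (m ⟨k - 1, by omega⟩) (m ⟨k, by omega⟩) with hc | hc
    · left
      refine ⟨h1, fun i h' hki => ?_⟩
      rcases Nat.eq_or_lt_of_le hki with heq | hlt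
      · have e1 : (⟨i, by omega⟩ : Fin r) = ⟨k - 1, by omega⟩ := by simp only [Fin.mk.injEq]; omega
        have e2 : (⟨i + 1, h'⟩ : Fin r) = ⟨k, by omega⟩ := by simp only [Fin.mk.injEq]; omega
        rw [e1, e2]; exact hc
      · exact h2 i h' (by omega)
    · right
      refine ⟨fun i h' hik => ?_, fun i h' hki => h2 i h' (by omega)⟩
      rcases Nat.eq_or_lt_of_le (Nat.lt_succ_iff.mp hik) with heq | hlt
      · have e1 : (⟨i, by omega⟩ : Fin r) = ⟨k - 1, by omega⟩ := by simp only [Fin.mk.injEq]; omega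
        have e2 : (⟨i + 1, h'⟩ : Fin r) = ⟨k, by omega⟩ := by simp only [Fin.mk.injEq]; omega
        rw [e1, e2]; exact hc
      · exact h1 i h' (by omega)
  · rintro (⟨h1, h2⟩ | ⟨h1, h2⟩)
    · exact ⟨h1, fun i h' hki => h2 i h' (by omega)⟩
    · exact ⟨fun i h' hik => h1 i h' (by omega), fun i h' hki => h2 i h' (by omega)⟩

lemma cnd_not_both {r k : ℕ} (hk : 1 ≤ k) (hkr : k < r) (m : Fin r → ℕ+)
    (hA : cnd r k m) (hB : cnd r (k + 1) m) : False := by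
  have h1 := hA.2 (k - 1) (by omega) (by omega)
  have h2 := hB.1 (k - 1) (by omega) (by omega)
  exact absurd (lt_of_lt_of_le h1 h2) (lt_irrefl _)

lemma tsum_mul_tsum_ennreal {X Y : Type*} (f : X → ℝ≥0∞) (g : Y → ℝ≥0∞) :
    (∑' x, f x) * (∑' y, g y) = ∑' p : X × Y, f p.1 * g p.2 := by
  calc (∑' x, f x) * (∑' y, g y) = ∑' x, f x * (∑' y, g y) := ENNReal.tsum_mul_right.symm
    _ = ∑' x, ∑' y, f x * g y := tsum_congr fun x => ENNReal.tsum_mul_left.symm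
    _ = ∑' p : X × Y, f p.1 * g p.2 := ENNReal.tsum_prod.symm

lemma split_lemma (r : ℕ) (a : Fin r → ℕ) (k : ℕ) (hk : 1 ≤ k) (hkr : k < r) :
    ∑' m : {m : Fin r → ℕ+ // cndP r k m}, MW r a m.1 = UU r a k + UU r a (k + 1) := by
  unfold UU
  have e1 : (∑' m : {m : Fin r → ℕ+ // cndP r k m}, MW r a m.1) =
      ∑' m : Fin r → ℕ+, Set.indicator {m | cndP r k m} (MW r a) m := tsum_subtype _ _
  have e2 : (∑' m : {m : Fin r → ℕ+ // cnd r k m}, MW r a m.1) =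
      ∑' m : Fin r → ℕ+, Set.indicator {m | cnd r k m} (MW r a) m := tsum_subtype _ _
  have e3 : (∑' m : {m : Fin r → ℕ+ // cnd r (k + 1) m}, MW r a m.1) =
      ∑' m : Fin r → ℕ+, Set.indicator {m | cnd r (k + 1) m} (MW r a) m := tsum_subtype _ _
  rw [e1, e2, e3, ← ENNReal.tsum_add]
  apply tsum_congr
  intro m
  have hset : {m : Fin r → ℕ+ | cndP r k m} =
      {m : Fin r → ℕ+ | cnd r k m} ∪ {m : Fin r → ℕ+ | cnd r (k + 1) m} := by
    ext m; simpa using cndP_iff hk hkr m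
  have hdisj : Disjoint {m : Fin r → ℕ+ | cnd r k m} {m : Fin r → ℕ+ | cnd r (k + 1) m} := by
    rw [Set.disjoint_left]
    intro m h1 h2
    exact cnd_not_both hk hkr m h1 h2
  rw [hset, Set.indicator_union_of_disjoint hdisj]

def glue (r k : ℕ) (x : Fin k → ℕ+) (y : Fin (r - k) → ℕ+) : Fin r → ℕ+ :=
  fun i => if h : i.1 < k then x ⟨k - 1 - i.1, by omega⟩
           else y ⟨i.1 - k, by have := i.isLt; omega⟩

lemma glue_lt (r k : ℕ) (x : Fin k → ℕ+) (y : Fin (r - k) → ℕ+) {c : ℕ} {hc : c < r}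
    (h : c < k) : glue r k x y ⟨c, hc⟩ = x ⟨k - 1 - c, by omega⟩ := dif_pos h

lemma glue_ge (r k : ℕ) (x : Fin k → ℕ+) (y : Fin (r - k) → ℕ+) {c : ℕ} {hc : c < r}
    (h : k ≤ c) : glue r k x y ⟨c, hc⟩ = y ⟨c - k, by omega⟩ := dif_neg (show ¬ c < k by omega)

lemma glue_cndP (r k : ℕ) (x : Fin k → ℕ+) (hx : Monotone x)
    (y : Fin (r - k) → ℕ+) (hy : StrictMono y) : cndP r k (glue r k x y) := by
  constructor
  · intro i h' hik
    rw [glue_lt r k x y hik, glue_lt r k x y (show i < k by omega)]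
    exact hx (by simp [Fin.mk_le_mk]; omega)
  · intro i h' hki
    rw [glue_ge r k x y (show k ≤ i + 1 by omega), glue_ge r k x y hki]
    exact hy (by simp [Fin.mk_lt_mk]; omega)

def glueEquiv (r k : ℕ) (hk : 1 ≤ k) (hkr : k < r) :
    ({x : Fin k → ℕ+ // Monotone x} × {y : Fin (r - k) → ℕ+ // StrictMono y}) ≃
      {m : Fin r → ℕ+ // cndP r k m} where
  toFun p := ⟨glue r k p.1.1 p.2.1, glue_cndP r k p.1.1 p.1.2 p.2.1 p.2.2⟩
  invFun m :=
    (⟨fun i => m.1 ⟨k - 1 - i.1, by have := i.isLt; omega⟩, by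
        intro i j hij
        have := chain_le m.1 k m.2.1 (k - 1 - i.1) (k - 1 - j.1)
          (by have := i.isLt; omega) (by omega) (by have := Fin.le_def.mp hij; omega)
        exact this⟩,
     ⟨fun j => m.1 ⟨k + j.1, by have := j.isLt; omega⟩, by
        intro i j hij
        have := chain_lt m.1 k m.2.2 (k + j.1) (k + i.1) (by omega)
          (by have := Fin.lt_def.mp hij; omega) (by have := j.isLt; omega)
        exact this⟩)
  left_inv p := by
    obtain ⟨⟨x, hx⟩, ⟨y, hy⟩⟩ := p
    refine Prod.ext (Subtype.ext (funext fun i => ?_)) (Subtype.ext (funext fun j => ?_))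
    · obtain ⟨iv, hivk⟩ := i
      show glue r k x y ⟨k - 1 - iv, _⟩ = x ⟨iv, hivk⟩
      rw [glue_lt r k x y (show k - 1 - iv < k by omega)]
      exact congrArg x (Fin.ext (show k - 1 - (k - 1 - iv) = iv by omega))
    · obtain ⟨jv, hjv⟩ := j
      show glue r k x y ⟨k + jv, _⟩ = y ⟨jv, hjv⟩
      rw [glue_ge r k x y (show k ≤ k + jv by omega)]
      exact congrArg y (Fin.ext (show k + jv - k = jv by omega))
  right_inv m := by
    apply Subtype.ext
    funext i
    obtain ⟨iv, hiv⟩ := i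
    show glue r k _ _ ⟨iv, hiv⟩ = m.1 ⟨iv, hiv⟩
    by_cases h : iv < k
    · rw [glue_lt r k _ _ h]
      exact congrArg m.1 (Fin.ext (show k - 1 - (k - 1 - iv) = iv by omega))
    · rw [glue_ge r k _ _ (show k ≤ iv by omega)]
      exact congrArg m.1 (Fin.ext (show k + (iv - k) = iv by omega))

lemma MW_glue (r : ℕ) (a : Fin r → ℕ) (k : ℕ) (hk : 1 ≤ k) (hkr : k < r)
    (x : Fin k → ℕ+) (y : Fin (r - k) → ℕ+) :
    MW r a (glue r k x y) =
      MW k (fun i : Fin k => a ⟨k - 1 - i.1, by have := i.isLt; omega⟩) x *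
      MW (r - k) (fun j : Fin (r - k) => a ⟨k + j.1, by have := j.isLt; omega⟩) y := by
  unfold MW
  have hr : k + (r - k) = r := by omega
  have key := Equiv.prod_comp (finCongr hr)
    (fun i : Fin r => (((glue r k x y i : ℕ) : ℝ≥0∞) ^ (a i))⁻¹)
  rw [← key, Fin.prod_univ_add]
  congr 1
  · -- first block: ∏ i : Fin k
    have key2 := Equiv.prod_comp (Fin.revPerm (n := k))
      (fun i : Fin k =>
        (((glue r k x y (finCongr hr (Fin.castAdd (r - k) i)) : ℕ) : ℝ≥0∞) ^
          (a (finCongr hr (Fin.castAdd (r - k) i))))⁻¹)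
    rw [← key2]
    refine Finset.prod_congr rfl fun i _ => ?_
    obtain ⟨iv, hivk⟩ := i
    have hval : (finCongr hr (Fin.castAdd (r - k) (Fin.revPerm ⟨iv, hivk⟩))) =
        (⟨k - 1 - iv, by omega⟩ : Fin r) := by
      apply Fin.ext
      simp [Fin.val_rev]
      omega
    rw [hval, glue_lt r k x y (show k - 1 - iv < k by omega)]
    congr 2
    exact congrArg (fun t => ((x t : ℕ) : ℝ≥0∞)) (Fin.ext (show k - 1 - (k - 1 - iv) = iv by omega))
  · refine Finset.prod_congr rfl fun j _ => ?_
    obtain ⟨jv, hjv⟩ := j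
    have hval : (finCongr hr (Fin.natAdd k ⟨jv, hjv⟩)) = (⟨k + jv, by omega⟩ : Fin r) := by
      apply Fin.ext
      simp
    rw [hval, glue_ge r k x y (show k ≤ k + jv by omega)]
    congr 2
    exact congrArg (fun t => ((y t : ℕ) : ℝ≥0∞)) (Fin.ext (show k + jv - k = jv by omega))

lemma prodEq (r : ℕ) (a : Fin r → ℕ) (k : ℕ) (hk : 1 ≤ k) (hkr : k < r) :
    EZS k (fun i : Fin k => a ⟨k - 1 - i.1, by have := i.isLt; omega⟩) *
      EZ (r - k) (fun j : Fin (r - k) => a ⟨k + j.1, by have := j.isLt; omega⟩) =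
    ∑' m : {m : Fin r → ℕ+ // cndP r k m}, MW r a m.1 := by
  unfold EZS EZ
  rw [tsum_mul_tsum_ennreal]
  rw [← Equiv.tsum_eq (glueEquiv r k hk hkr) (fun m => MW r a m.1)]
  apply tsum_congr
  intro p
  exact (MW_glue r a k hk hkr p.1.1 p.2.1).symm

lemma UU_one (r : ℕ) (a : Fin r → ℕ) : UU r a 1 = EZ r a := by
  unfold UU EZ
  exact Equiv.tsum_eq (Equiv.subtypeEquivRight fun m => cnd_one_iff m)
    (fun m : {m : Fin r → ℕ+ // StrictMono m} => MW r a m.1)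

def revEquiv (r : ℕ) : {x : Fin r → ℕ+ // Monotone x} ≃ {m : Fin r → ℕ+ // cnd r r m} where
  toFun x := ⟨fun i => x.1 ⟨r - 1 - i.1, by have := i.isLt; omega⟩, by
    rw [cnd_r_iff]
    intro i h'
    exact x.2 (show (⟨r - 1 - (i + 1), by omega⟩ : Fin r) ≤ ⟨r - 1 - i, by omega⟩ by
      simp [Fin.mk_le_mk]; omega)⟩
  invFun m := ⟨fun i => m.1 ⟨r - 1 - i.1, by have := i.isLt; omega⟩, by
    intro i j hij
    have h1 := (cnd_r_iff m.1).mp m.2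
    exact chain_le m.1 r (fun i h' _ => h1 i h') (r - 1 - i.1) (r - 1 - j.1)
      (by have := i.isLt; omega) (by have := i.isLt; omega)
      (by have := Fin.le_def.mp hij; omega)⟩
  left_inv x := by
    apply Subtype.ext
    funext i
    obtain ⟨iv, hiv⟩ := i
    show x.1 ⟨r - 1 - (r - 1 - iv), _⟩ = x.1 ⟨iv, hiv⟩
    exact congrArg x.1 (Fin.ext (show r - 1 - (r - 1 - iv) = iv by omega))
  right_inv m := by
    apply Subtype.ext
    funext i
    obtain ⟨iv, hiv⟩ := i
    show m.1 ⟨r - 1 - (r - 1 - iv), _⟩ = m.1 ⟨iv, hiv⟩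
    exact congrArg m.1 (Fin.ext (show r - 1 - (r - 1 - iv) = iv by omega))

lemma UU_last (r : ℕ) (hr : 1 ≤ r) (a : Fin r → ℕ) :
    UU r a r = EZS r (fun i : Fin r => a ⟨r - 1 - i.1, by have := i.isLt; omega⟩) := by
  unfold UU EZS
  rw [← Equiv.tsum_eq (revEquiv r) (fun m => MW r a m.1)]
  apply tsum_congr
  intro x
  show MW r a (fun i => x.1 ⟨r - 1 - i.1, _⟩) = MW r _ x.1
  unfold MW
  have key := Equiv.prod_comp (Fin.revPerm (n := r))
    (fun i : Fin r => (((x.1 ⟨r - 1 - i.1, by have := i.isLt; omega⟩ : ℕ) : ℝ≥0∞) ^ (a i))⁻¹)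
  rw [← key]
  refine Finset.prod_congr rfl fun i _ => ?_
  obtain ⟨iv, hiv⟩ := i
  have h1 : ((Fin.revPerm ⟨iv, hiv⟩ : Fin r)) = (⟨r - 1 - iv, by omega⟩ : Fin r) := by
    apply Fin.ext
    simp [Fin.val_rev]
    omega
  rw [h1]
  congr 2
  exact congrArg (fun t => ((x.1 t : ℕ) : ℝ≥0∞))
    (Fin.ext (show r - 1 - (r - 1 - iv) = iv by omega))

lemma g_tsum_ne_top (n : ℕ) (hn : 1 ≤ n) :
    (∑' kk : ℕ+, ((kk : ℕ) : ℝ≥0∞) ^ (-(1 + 1 / (n : ℝ)))) ≠ ∞ := by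
  set p : ℝ := 1 + 1 / (n : ℝ) with hp
  have hn0 : (0 : ℝ) < (n : ℝ) := by exact_mod_cast hn
  have hp1 : 1 < p := by
    rw [hp]
    have : 0 < 1 / (n : ℝ) := by positivity
    linarith
  have hf0 : Summable (fun j : ℕ => ((j : ℝ) ^ p)⁻¹) := Real.summable_nat_rpow_inv.mpr hp1
  have hfp : Summable (fun kk : ℕ+ => (((kk : ℕ) : ℝ) ^ p)⁻¹) :=
    hf0.comp_injective (fun x y h => PNat.coe_injective h)
  have hpt : ∀ kk : ℕ+, ((kk : ℕ) : ℝ≥0∞) ^ (-p) = ENNReal.ofReal ((((kk : ℕ) : ℝ)) ^ p)⁻¹ := by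
    intro kk
    have hpos : (0 : ℝ) < ((kk : ℕ) : ℝ) := by exact_mod_cast kk.pos
    rw [ENNReal.rpow_neg, ENNReal.ofReal_inv_of_pos (Real.rpow_pos_of_pos hpos p),
      ← ENNReal.ofReal_rpow_of_pos hpos, ENNReal.ofReal_natCast]
  calc ∑' kk : ℕ+, ((kk : ℕ) : ℝ≥0∞) ^ (-p)
      = ∑' kk : ℕ+, ENNReal.ofReal ((((kk : ℕ) : ℝ)) ^ p)⁻¹ := tsum_congr hpt
    _ = ENNReal.ofReal (∑' kk : ℕ+, ((((kk : ℕ) : ℝ)) ^ p)⁻¹) :=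
        (ENNReal.ofReal_tsum_of_nonneg (fun kk => by positivity) hfp).symm
    _ ≠ ∞ := ENNReal.ofReal_ne_top

lemma tsum_pi_prod (g : ℕ+ → ℝ≥0∞) :
    ∀ n : ℕ, (∑' m : Fin n → ℕ+, ∏ i, g (m i)) = (∑' kk : ℕ+, g kk) ^ n := by
  intro n
  induction n with
  | zero =>
    rw [pow_zero, tsum_eq_single (default : Fin 0 → ℕ+) (fun b hb => (hb (funext fun i => i.elim0)).elim)]
    exact Finset.prod_of_isEmpty _
  | succ n ih =>
    have h1 : ∀ p : ℕ+ × (Fin n → ℕ+),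
        (∏ i, g ((Fin.consEquiv (fun _ : Fin (n + 1) => ℕ+) p) i)) =
          g p.1 * ∏ i : Fin n, g (p.2 i) := by
      intro p
      rw [Fin.prod_univ_succ]
      simp [Fin.consEquiv]
    calc (∑' m : Fin (n + 1) → ℕ+, ∏ i, g (m i))
        = ∑' p : ℕ+ × (Fin n → ℕ+), ∏ i, g ((Fin.consEquiv (fun _ : Fin (n + 1) => ℕ+) p) i) :=
          (Equiv.tsum_eq (Fin.consEquiv (fun _ : Fin (n + 1) => ℕ+)) (fun m => ∏ i, g (m i))).symm
      _ = ∑' p : ℕ+ × (Fin n → ℕ+), g p.1 * ∏ i : Fin n, g (p.2 i) := tsum_congr h1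
      _ = (∑' kk : ℕ+, g kk) * (∑' y : Fin n → ℕ+, ∏ i : Fin n, g (y i)) :=
          (tsum_mul_tsum_ennreal g (fun y : Fin n → ℕ+ => ∏ i : Fin n, g (y i))).symm
      _ = (∑' kk : ℕ+, g kk) ^ (n + 1) := by rw [ih, pow_succ, mul_comm]

lemma MW_le_bound (n : ℕ) (hn : 1 ≤ n) (b : Fin n → ℕ) (hb : ∀ i, 1 ≤ b i)
    (hlast : 2 ≤ b ⟨n - 1, by omega⟩) (m : Fin n → ℕ+) (hm : Monotone m) :
    MW n b m ≤ ∏ i, ((m i : ℕ) : ℝ≥0∞) ^ (-(1 + 1 / (n : ℝ))) := by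
  set L : Fin n := ⟨n - 1, by omega⟩ with hL
  have hone : ∀ i, (1 : ℝ≥0∞) ≤ ((m i : ℕ) : ℝ≥0∞) := by
    intro i; exact_mod_cast (m i).one_le
  have hne0 : ∀ i, ((m i : ℕ) : ℝ≥0∞) ≠ 0 := fun i => by
    simpa using (m i).ne_zero
  have hnetop : ∀ i, ((m i : ℕ) : ℝ≥0∞) ≠ ∞ := fun i => ENNReal.natCast_ne_top _
  have hmax : ∀ i, ((m i : ℕ) : ℝ≥0∞) ≤ ((m L : ℕ) : ℝ≥0∞) := by
    intro i
    exact_mod_cast hm (show i ≤ L by rw [Fin.le_def]; have := i.isLt; simp [hL]; omega)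
  have step1 : MW n b m ≤
      (∏ i, (((m i : ℕ) : ℝ≥0∞))⁻¹) * (((m L : ℕ) : ℝ≥0∞))⁻¹ := by
    have h1 : MW n b m ≤ ∏ i, ((((m i : ℕ) : ℝ≥0∞))⁻¹ *
        (if i = L then (((m i : ℕ) : ℝ≥0∞))⁻¹ else 1)) := by
      unfold MW
      refine Finset.prod_le_prod' fun i _ => ?_
      by_cases hi : i = L
      · subst hi
        rw [if_pos rfl, ← ENNReal.mul_inv (Or.inl (hne0 _)) (Or.inl (hnetop _)), ← pow_two,
          ENNReal.inv_le_inv]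
        exact pow_le_pow_right₀ (hone _) hlast
      · rw [if_neg hi, mul_one, ENNReal.inv_le_inv]
        calc ((m i : ℕ) : ℝ≥0∞) = ((m i : ℕ) : ℝ≥0∞) ^ 1 := (pow_one _).symm
          _ ≤ ((m i : ℕ) : ℝ≥0∞) ^ (b i) := pow_le_pow_right₀ (hone i) (hb i)
    refine h1.trans (le_of_eq ?_)
    rw [Finset.prod_mul_distrib, Finset.prod_ite_eq' Finset.univ L
      (fun i => (((m i : ℕ) : ℝ≥0∞))⁻¹)]
    simp
  have step2 : (((m L : ℕ) : ℝ≥0∞))⁻¹ ≤ ∏ i, ((m i : ℕ) : ℝ≥0∞) ^ (-(1 / (n : ℝ))) := by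
    have hn0 : ((n : ℝ)) ≠ 0 := by positivity
    have e1 : (∏ _i : Fin n, ((m L : ℕ) : ℝ≥0∞) ^ (-(1 / (n : ℝ)))) = (((m L : ℕ) : ℝ≥0∞))⁻¹ := by
      rw [Finset.prod_const, Finset.card_univ, Fintype.card_fin,
        ← ENNReal.rpow_natCast (((m L : ℕ) : ℝ≥0∞) ^ (-(1 / (n : ℝ)))) n, ← ENNReal.rpow_mul,
        show -(1 / (n : ℝ)) * (n : ℕ) = -1 by field_simp, ENNReal.rpow_neg_one]
    rw [← e1]
    refine Finset.prod_le_prod' fun i _ => ?_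
    rw [ENNReal.rpow_neg, ENNReal.rpow_neg, ENNReal.inv_le_inv]
    exact ENNReal.rpow_le_rpow (hmax i) (by positivity)
  calc MW n b m ≤ (∏ i, (((m i : ℕ) : ℝ≥0∞))⁻¹) * (((m L : ℕ) : ℝ≥0∞))⁻¹ := step1
    _ ≤ (∏ i, (((m i : ℕ) : ℝ≥0∞))⁻¹) * ∏ i, ((m i : ℕ) : ℝ≥0∞) ^ (-(1 / (n : ℝ))) :=
        mul_le_mul_right step2 _
    _ = ∏ i, ((m i : ℕ) : ℝ≥0∞) ^ (-(1 + 1 / (n : ℝ))) := by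
        rw [← Finset.prod_mul_distrib]
        refine Finset.prod_congr rfl fun i _ => ?_
        rw [show -(1 + 1 / (n : ℝ)) = (-1) + (-(1 / (n : ℝ))) by ring,
          ENNReal.rpow_add _ _ (hne0 i) (hnetop i), ENNReal.rpow_neg_one]

lemma EZS_ne_top (n : ℕ) (hn : 1 ≤ n) (b : Fin n → ℕ) (hb : ∀ i, 1 ≤ b i)
    (hlast : 2 ≤ b ⟨n - 1, by omega⟩) : EZS n b ≠ ∞ := by
  have h1 : EZS n b = ∑' m : Fin n → ℕ+, Set.indicator {m | Monotone m} (MW n b) m :=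
    tsum_subtype _ _
  have h2 : (∑' m : Fin n → ℕ+, Set.indicator {m | Monotone m} (MW n b) m) ≤
      ∑' m : Fin n → ℕ+, ∏ i, ((m i : ℕ) : ℝ≥0∞) ^ (-(1 + 1 / (n : ℝ))) := by
    refine ENNReal.tsum_le_tsum fun m => ?_
    by_cases hm : Monotone m
    · rw [Set.indicator_of_mem (show m ∈ {m : Fin n → ℕ+ | Monotone m} from hm) (MW n b)]
      exact MW_le_bound n hn b hb hlast m hm
    · rw [Set.indicator_of_notMem (show m ∉ {m : Fin n → ℕ+ | Monotone m} from hm) (MW n b)]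
      exact zero_le
  rw [tsum_pi_prod (fun kk : ℕ+ => ((kk : ℕ) : ℝ≥0∞) ^ (-(1 + 1 / (n : ℝ)))) n] at h2
  exact ne_top_of_le_ne_top (ENNReal.pow_ne_top (g_tsum_ne_top n hn)) (h1 ▸ h2)

lemma EZ_le_EZS (n : ℕ) (b : Fin n → ℕ) : EZ n b ≤ EZS n b := by
  have h1 : EZ n b = ∑' m : Fin n → ℕ+, Set.indicator {m | StrictMono m} (MW n b) m :=
    tsum_subtype _ _
  have h2 : EZS n b = ∑' m : Fin n → ℕ+, Set.indicator {m | Monotone m} (MW n b) m :=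
    tsum_subtype _ _
  rw [h1, h2]
  refine ENNReal.tsum_le_tsum fun m =>
    Set.indicator_le_indicator_of_subset (fun m hm => hm.monotone) (fun _ => zero_le) m

lemma EZ_ne_top (n : ℕ) (hn : 1 ≤ n) (b : Fin n → ℕ) (hb : ∀ i, 1 ≤ b i)
    (hlast : 2 ≤ b ⟨n - 1, by omega⟩) : EZ n b ≠ ∞ :=
  ne_top_of_le_ne_top (EZS_ne_top n hn b hb hlast) (EZ_le_EZS n b)

lemma telescope (u : ℕ → ℝ) :
    ∀ n : ℕ, ∑ j ∈ Finset.range n, (-1 : ℝ) ^ j * (u j + u (j + 1)) =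
      u 0 + (-1 : ℝ) ^ (n + 1) * u n := by
  intro n
  induction n with
  | zero => simp only [Finset.range_zero, Finset.sum_empty, pow_one]; ring
  | succ n ih => rw [Finset.sum_range_succ, ih, pow_succ, pow_succ]; ring

lemma EZS_congr' {n : ℕ} {b b' : Fin n → ℕ} (h : ∀ i, b i = b' i) : EZS n b = EZS n b' := by
  rw [funext h]

lemma EZ_congr' {n : ℕ} {b b' : Fin n → ℕ} (h : ∀ i, b i = b' i) : EZ n b = EZ n b' := by
  rw [funext h]

noncomputable def uu (r : ℕ) (a : Fin r → ℕ) : ℕ → ℝ := fun t => (UU r a (t + 1)).toReal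

set_option maxHeartbeats 2000000 in
/-- For a tuple `(α₁, …, α_r)` of positive integers with `r ≥ 2`, `α₁ ≥ 2` and `α_r ≥ 2`,
`ζ(α₁,…,α_r) + (-1)^r ζ⋆(α_r,…,α₁) = ∑_{k=1}^{r-1} (-1)^{k+1} ζ⋆(α_k,…,α₁) ζ(α_{k+1},…,α_r)`. -/
theorem mz_add_mzs_reverse (r : ℕ) (hr : 2 ≤ r) (a : Fin r → ℕ)
    (hpos : ∀ i, 1 ≤ a i)
    (h1 : 2 ≤ a ⟨0, by omega⟩) (hlast : 2 ≤ a ⟨r - 1, by omega⟩) :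
    mz (List.ofFn a) +
      (-1 : ℝ) ^ r * mzs (List.ofFn (fun i : Fin r => a ⟨r - 1 - i.1, by omega⟩)) =
    ∑ j : Fin (r - 1),
      (-1 : ℝ) ^ ((j.1 + 1) + 1) *
        mzs (List.ofFn (fun i : Fin (j.1 + 1) =>
          a ⟨j.1 - i.1, by have := j.isLt; omega⟩)) *
        mz (List.ofFn (fun i : Fin (r - (j.1 + 1)) =>
          a ⟨j.1 + 1 + i.1, by have := i.isLt; omega⟩)) := by
  have hprod : ∀ t : ℕ, (ht : t < r - 1) →
      EZS (t + 1) (fun i : Fin (t + 1) => a ⟨t - i.1, by omega⟩) *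
        EZ (r - (t + 1)) (fun i : Fin (r - (t + 1)) => a ⟨t + 1 + i.1, by have := i.isLt; omega⟩) =
      UU r a (t + 1) + UU r a (t + 1 + 1) := by
    intro t ht
    have h0 := (prodEq r a (t + 1) (by omega) (by omega)).trans
      (split_lemma r a (t + 1) (by omega) (by omega))
    have e1 : EZS (t + 1) (fun i : Fin (t + 1) => a ⟨t - i.1, by omega⟩) =
        EZS (t + 1) (fun i : Fin (t + 1) => a ⟨t + 1 - 1 - i.1, by omega⟩) :=
      EZS_congr' fun i => congrArg a (Fin.ext (show t - (i : ℕ) = t + 1 - 1 - (i : ℕ) by omega))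
    rw [e1]
    exact h0
  have hfin : ∀ t : ℕ, t < r → UU r a (t + 1) ≠ ∞ := by
    intro t ht
    rcases Nat.lt_or_ge (t + 1) r with hlt | hge
    case inr =>
      have heq : t + 1 = r := by omega
      rw [heq, UU_last r (by omega) a]
      refine EZS_ne_top r (by omega) _ (fun i => hpos _) ?_
      exact le_trans h1 (le_of_eq (congrArg a (Fin.ext (show (0 : ℕ) = r - 1 - (r - 1) by omega))))
    · have h0 := (prodEq r a (t + 1) (by omega) hlt).trans
        (split_lemma r a (t + 1) (by omega) hlt)
      refine ne_top_of_le_ne_top (ENNReal.mul_ne_top ?_ ?_) (le_self_add.trans_eq h0.symm)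
      · refine EZS_ne_top (t + 1) (by omega) _ (fun i => hpos _) ?_
        exact le_trans h1 (le_of_eq (congrArg a
          (Fin.ext (show (0 : ℕ) = t + 1 - 1 - (t + 1 - 1) by omega))))
      · refine EZ_ne_top (r - (t + 1)) (by omega) _ (fun i => hpos _) ?_
        exact le_trans hlast (le_of_eq (congrArg a
          (Fin.ext (show r - 1 = t + 1 + (r - (t + 1) - 1) by omega))))
  have hterm : ∀ j : Fin (r - 1),
      (-1 : ℝ) ^ ((j.1 + 1) + 1) *
        mzs (List.ofFn (fun i : Fin (j.1 + 1) =>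
          a ⟨j.1 - i.1, by have := j.isLt; omega⟩)) *
        mz (List.ofFn (fun i : Fin (r - (j.1 + 1)) =>
          a ⟨j.1 + 1 + i.1, by have := i.isLt; omega⟩)) =
      (-1 : ℝ) ^ (j.1 : ℕ) * (uu r a j.1 + uu r a (j.1 + 1)) := by
    intro j
    rw [mzs_ofFn, mz_ofFn, mul_assoc, ← ENNReal.toReal_mul, hprod j.1 j.isLt,
      ENNReal.toReal_add (hfin j.1 (by have := j.isLt; omega))
        (hfin (j.1 + 1) (by have := j.isLt; omega))]
    have e1 : uu r a j.1 = (UU r a (j.1 + 1)).toReal := rfl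
    have e2 : uu r a (j.1 + 1) = (UU r a (j.1 + 1 + 1)).toReal := rfl
    rw [e1, e2, show (-1 : ℝ) ^ (j.1 + 1 + 1) = (-1) ^ (j.1 : ℕ) by rw [pow_succ, pow_succ]; ring]
  trans ((uu r a 0) + (-1 : ℝ) ^ r * uu r a (r - 1))
  · congr 1
    · rw [mz_ofFn, ← UU_one r a]
      rfl
    · congr 1
      rw [mzs_ofFn]
      have e := UU_last r (by omega) a
      rw [← e]
      unfold uu
      rw [show r - 1 + 1 = r by omega]
  · trans (∑ j : Fin (r - 1), (-1 : ℝ) ^ (j.1 : ℕ) * (uu r a j.1 + uu r a (j.1 + 1)))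
    · rw [Fin.sum_univ_eq_sum_range
        (fun t : ℕ => (-1 : ℝ) ^ t * (uu r a t + uu r a (t + 1))) (r - 1),
        telescope (uu r a) (r - 1), show r - 1 + 1 = r by omega]
    · exact Finset.sum_congr rfl fun j _ => (hterm j).symm
end

section
/- Let (α_1, …, α_r) and (β_1, …, β_m) be tuples of positive integers with r ≥ 1, m ≥ 1, α_r ≥ 2 and β_m ≥ 2. Then ζ(α_1, …, α_r) · ζ*(β_1, …, β_m) = Z_L(α_1, …, α_r; β_1, …, β_m) + Z_L(β_1, α_1, …, α_r; β_2, …, β_m). -/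
open scoped BigOperators

/-- `Z_U(α; β)`: sum over `1 ≤ k₁ < ⋯ < k_r` and `1 ≤ ℓ₁ ≤ ⋯ ≤ ℓ_m ≤ k_r` of
`k₁^{-α₁} ⋯ k_r^{-α_r} ℓ₁^{-β₁} ⋯ ℓ_m^{-β_m}` (the `ℓ`-sum is `1` when `m = 0`). -/
noncomputable def ZU (a b : List ℕ) : ℝ :=
  ∑' p : {p : (Fin a.length → ℕ+) × (Fin b.length → ℕ+) //
      StrictMono p.1 ∧ Monotone p.2 ∧
      ∀ (i : Fin a.length) (j : Fin b.length), i.1 = a.length - 1 → p.2 j ≤ p.1 i},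
    (∏ i, (1 : ℝ) / ((p.1.1 i : ℕ) : ℝ) ^ a.get i) *
      ∏ j, (1 : ℝ) / ((p.1.2 j : ℕ) : ℝ) ^ b.get j

/-- `Z_L(α; β)`: sum over `1 ≤ k₁ < ⋯ < k_r` and `k₁ ≤ ℓ₁ ≤ ⋯ ≤ ℓ_m` of
`k₁^{-α₁} ⋯ k_r^{-α_r} ℓ₁^{-β₁} ⋯ ℓ_m^{-β_m}` (the `ℓ`-sum is `1` when `m = 0`). -/
noncomputable def ZL (a b : List ℕ) : ℝ :=
  ∑' p : {p : (Fin a.length → ℕ+) × (Fin b.length → ℕ+) //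
      StrictMono p.1 ∧ Monotone p.2 ∧
      ∀ (i : Fin a.length) (j : Fin b.length), i.1 = 0 → p.1 i ≤ p.2 j},
    (∏ i, (1 : ℝ) / ((p.1.1 i : ℕ) : ℝ) ^ a.get i) *
      ∏ j, (1 : ℝ) / ((p.1.2 j : ℕ) : ℝ) ^ b.get j

/-- `Z_B(α; β)`: sum over `1 ≤ k₁ < ⋯ < k_r` and `k₁ ≤ ℓ₁ ≤ ⋯ ≤ ℓ_m ≤ k_r` of
`k₁^{-α₁} ⋯ k_r^{-α_r} ℓ₁^{-β₁} ⋯ ℓ_m^{-β_m}` (the `ℓ`-sum is `1` when `m = 0`). -/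
noncomputable def ZB (a b : List ℕ) : ℝ :=
  ∑' p : {p : (Fin a.length → ℕ+) × (Fin b.length → ℕ+) //
      StrictMono p.1 ∧ Monotone p.2 ∧
      (∀ (i : Fin a.length) (j : Fin b.length), i.1 = 0 → p.1 i ≤ p.2 j) ∧
      ∀ (i : Fin a.length) (j : Fin b.length), i.1 = a.length - 1 → p.2 j ≤ p.1 i},
    (∏ i, (1 : ℝ) / ((p.1.1 i : ℕ) : ℝ) ^ a.get i) *
      ∏ j, (1 : ℝ) / ((p.1.2 j : ℕ) : ℝ) ^ b.get j


noncomputable def tmx {n : ℕ} (c : Fin n → ℕ) (x : Fin n → ℕ+) : ℝ :=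
  ∏ i, (1 : ℝ) / ((x i : ℕ) : ℝ) ^ c i

lemma tmx_nonneg {n : ℕ} (c : Fin n → ℕ) (x : Fin n → ℕ+) : 0 ≤ tmx c x :=
  Finset.prod_nonneg fun i _ => by positivity

lemma sq_tail (t : ℕ+) :
    Summable (fun k : {k : ℕ+ // t ≤ k} => (1:ℝ) / ((k.1 : ℕ) : ℝ)^2) ∧
    ∑' k : {k : ℕ+ // t ≤ k}, (1:ℝ) / ((k.1 : ℕ) : ℝ)^2 ≤ 2 / (t : ℕ) := by
  have hb : ∀ u : Finset {k : ℕ+ // t ≤ k},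
      ∑ x ∈ u, (1:ℝ) / ((x.1 : ℕ) : ℝ)^2 ≤ 2 / (t : ℕ) := by
    intro u
    have hinj : Set.InjOn (fun x : {k : ℕ+ // t ≤ k} => (x.1 : ℕ)) u := by
      intro x _ y _ h
      exact Subtype.ext (PNat.coe_injective h)
    rw [← Finset.sum_image (f := fun i : ℕ => (1:ℝ)/(i:ℝ)^2) hinj]
    have hsub : u.image (fun x : {k : ℕ+ // t ≤ k} => (x.1 : ℕ)) ⊆
        Finset.Ioo ((t:ℕ) - 1) ((u.sup (fun x => (x.1 : ℕ))) + 1) := by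
      intro i hi
      simp only [Finset.mem_image] at hi
      obtain ⟨x, hx, rfl⟩ := hi
      have h1 : (t:ℕ) ≤ (x.1 : ℕ) := by exact_mod_cast x.2
      have h2 : (x.1 : ℕ) ≤ u.sup (fun x => (x.1 : ℕ)) :=
        Finset.le_sup (f := fun x : {k : ℕ+ // t ≤ k} => (x.1 : ℕ)) hx
      have ht := t.2
      simp only [Finset.mem_Ioo]
      exact ⟨lt_of_lt_of_le (Nat.sub_lt ht one_pos) h1, Nat.lt_succ_of_le h2⟩
    calc ∑ i ∈ u.image (fun x : {k : ℕ+ // t ≤ k} => (x.1 : ℕ)), (1:ℝ)/(i:ℝ)^2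
        ≤ ∑ i ∈ Finset.Ioo ((t:ℕ) - 1) ((u.sup (fun x => (x.1 : ℕ))) + 1), (1:ℝ)/(i:ℝ)^2 := by
          apply Finset.sum_le_sum_of_subset_of_nonneg hsub
          intro i _ _; positivity
      _ ≤ 2 / (((t:ℕ) - 1 : ℕ) + 1) := by
          simpa [one_div] using sum_Ioo_inv_sq_le (α := ℝ) ((t:ℕ) - 1) ((u.sup (fun x => (x.1 : ℕ))) + 1)
      _ = 2 / (t : ℕ) := by
          have ht : 1 ≤ (t:ℕ) := t.2
          congr 1
          rw [Nat.cast_sub ht]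
          push_cast
          ring
  have hnn : 0 ≤ fun k : {k : ℕ+ // t ≤ k} => (1:ℝ) / ((k.1 : ℕ) : ℝ)^2 := by
    intro k; positivity
  have hs := summable_of_sum_le hnn hb
  exact ⟨hs, Summable.tsum_le_of_sum_le hs hb⟩

lemma tmx_cons {n : ℕ} (c : Fin (n+1) → ℕ) (a : ℕ+) (y : Fin n → ℕ+) :
    tmx c (Fin.cons a y) = ((1:ℝ)/((a:ℕ):ℝ)^(c 0)) * tmx (fun i => c i.succ) y := by
  unfold tmx
  rw [Fin.prod_univ_succ]
  simp [Fin.cons_zero, Fin.cons_succ]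

lemma tmx_split {n : ℕ} (c : Fin (n+1) → ℕ) (x : Fin (n+1) → ℕ+) :
    tmx c x = ((1:ℝ)/((x 0:ℕ):ℝ)^(c 0)) * tmx (fun i => c i.succ) (fun i => x i.succ) := by
  unfold tmx
  rw [Fin.prod_univ_succ]

lemma cons_mono {α : Type*} [Preorder α] {n : ℕ} {a : α} {y : Fin n → α}
    (hy : Monotone y) (h : ∀ j, a ≤ y j) : Monotone (Fin.cons a y) := by
  rw [Fin.monotone_iff_le_succ]
  intro i
  rw [Fin.cons_succ]
  rcases Fin.eq_zero_or_eq_succ i.castSucc with h0 | ⟨j, hj⟩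
  · rw [h0, Fin.cons_zero]; exact h i
  · rw [hj, Fin.cons_succ]
    apply hy
    have hv : (j : ℕ) + 1 = (i : ℕ) := by
      have := congrArg Fin.val hj; simpa using this.symm
    exact Fin.le_def.2 (by omega)

lemma cons_strictMono {α : Type*} [Preorder α] {n : ℕ} {a : α} {y : Fin n → α}
    (hy : StrictMono y) (h : ∀ j, a < y j) : StrictMono (Fin.cons a y) := by
  rw [Fin.strictMono_iff_lt_succ]
  intro i
  rw [Fin.cons_succ]
  rcases Fin.eq_zero_or_eq_succ i.castSucc with h0 | ⟨j, hj⟩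
  · rw [h0, Fin.cons_zero]; exact h i
  · rw [hj, Fin.cons_succ]
    apply hy
    have hv : (j : ℕ) + 1 = (i : ℕ) := by
      have := congrArg Fin.val hj; simpa using this.symm
    exact Fin.lt_def.2 (by omega)

lemma one_le_pnat_real (k : ℕ+) : (1:ℝ) ≤ ((k:ℕ):ℝ) := by exact_mod_cast k.2

lemma pow_tail_le (k : ℕ+) (c : ℕ) (hc : 1 ≤ c) :
    (1:ℝ)/((k:ℕ):ℝ)^c ≤ (1:ℝ)/((k:ℕ):ℝ) := by
  have h1 := one_le_pnat_real k
  apply one_div_le_one_div_of_le (by linarith)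
  calc ((k:ℕ):ℝ) = ((k:ℕ):ℝ)^1 := (pow_one _).symm
    _ ≤ ((k:ℕ):ℝ)^c := pow_le_pow_right₀ h1 hc


def oneEquiv (t : ℕ+) : {k : ℕ+ // t ≤ k} ≃ {x : Fin 1 → ℕ+ // Monotone x ∧ t ≤ x 0} where
  toFun := fun k => ⟨fun _ => k.1, monotone_const, k.2⟩
  invFun := fun x => ⟨x.1 0, x.2.2⟩
  left_inv := fun k => rfl
  right_inv := fun x => by
    apply Subtype.ext; funext i
    have hi : i = 0 := Subsingleton.elim i 0
    rw [hi]

def sigEquiv (n : ℕ) (t : ℕ+) :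
    (Σ k : {k : ℕ+ // t ≤ k}, {y : Fin (n+1) → ℕ+ // Monotone y ∧ k.1 ≤ y 0}) ≃
    {x : Fin (n+2) → ℕ+ // Monotone x ∧ t ≤ x 0} where
  toFun := fun q => ⟨Fin.cons q.1.1 q.2.1,
    cons_mono q.2.2.1 (fun j => le_trans q.2.2.2 (q.2.2.1 (Fin.zero_le j))),
    q.1.2⟩
  invFun := fun x => ⟨⟨x.1 0, x.2.2⟩, ⟨fun i => x.1 i.succ,
    fun i j hij => x.2.1 (Fin.succ_le_succ_iff.2 hij),
    x.2.1 (Fin.zero_le _)⟩⟩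
  left_inv := fun q => rfl
  right_inv := fun x => Subtype.ext (Fin.cons_self_tail x.1)

set_option maxHeartbeats 1000000 in
lemma mono_tail (n : ℕ) : ∀ (c : Fin (n+1) → ℕ), (∀ i, 1 ≤ c i) → 2 ≤ c (Fin.last n) → ∀ t : ℕ+,
    Summable (fun x : {x : Fin (n+1) → ℕ+ // Monotone x ∧ t ≤ x 0} => tmx c x.1) ∧
    ∑' x : {x : Fin (n+1) → ℕ+ // Monotone x ∧ t ≤ x 0}, tmx c x.1 ≤ 2^(n+1) / ((t:ℕ):ℝ) := by
  induction n with
  | zero =>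
    intro c hc1 hc2 t
    have hc0 : 2 ≤ c 0 := hc2
    let e := oneEquiv t
    set f : {x : Fin 1 → ℕ+ // Monotone x ∧ t ≤ x 0} → ℝ := fun x => tmx c x.1 with hf
    have hfe : ∀ k : {k : ℕ+ // t ≤ k}, (f ∘ e) k = (1:ℝ)/((k.1:ℕ):ℝ)^(c 0) := by
      intro k
      show tmx c _ = _
      unfold tmx
      rw [Fin.prod_univ_one]
      rfl
    have hle : ∀ k : {k : ℕ+ // t ≤ k}, (f ∘ e) k ≤ (1:ℝ)/((k.1:ℕ):ℝ)^2 := by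
      intro k
      rw [hfe k]
      have h1 := one_le_pnat_real k.1
      apply one_div_le_one_div_of_le (by positivity)
      exact pow_le_pow_right₀ h1 hc0
    have h0 : ∀ k : {k : ℕ+ // t ≤ k}, 0 ≤ (f ∘ e) k := by
      intro k; rw [hfe k]; positivity
    have hsfe : Summable (f ∘ e) := Summable.of_nonneg_of_le h0 hle (sq_tail t).1
    have hsf : Summable f := e.summable_iff.1 hsfe
    refine ⟨hsf, ?_⟩
    have h1 : ∑' x, f x = ∑' k, (f ∘ e) k := (e.tsum_eq f).symm
    rw [h1]
    calc ∑' k, (f ∘ e) k ≤ ∑' k : {k : ℕ+ // t ≤ k}, (1:ℝ)/((k.1:ℕ):ℝ)^2 :=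
          Summable.tsum_le_tsum hle hsfe (sq_tail t).1
      _ ≤ 2 / ((t:ℕ):ℝ) := (sq_tail t).2
      _ ≤ 2^(0+1) / ((t:ℕ):ℝ) := by norm_num
  | succ n IH =>
    intro c hc1 hc2 t
    set c' : Fin (n+1) → ℕ := fun i => c i.succ with hc'def
    have hc'1 : ∀ i, 1 ≤ c' i := fun i => hc1 _
    have hc'2 : 2 ≤ c' (Fin.last n) := by
      show 2 ≤ c (Fin.last n).succ
      rw [Fin.succ_last]; exact hc2
    let e := sigEquiv n t
    set f : {x : Fin (n+2) → ℕ+ // Monotone x ∧ t ≤ x 0} → ℝ := fun x => tmx c x.1 with hf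
    set g : (Σ k : {k : ℕ+ // t ≤ k}, {y : Fin (n+1) → ℕ+ // Monotone y ∧ k.1 ≤ y 0}) → ℝ :=
      fun q => ((1:ℝ)/((q.1.1:ℕ):ℝ)^(c 0)) * tmx c' q.2.1 with hg
    have hfg : f ∘ e = g := by
      funext q
      show tmx c (Fin.cons q.1.1 q.2.1) = _
      rw [tmx_cons]
    have hg0 : ∀ q, 0 ≤ g q := by
      intro q
      apply mul_nonneg (by positivity) (tmx_nonneg _ _)
    -- fiber summability
    have hfib : ∀ k : {k : ℕ+ // t ≤ k},
        Summable (fun y : {y : Fin (n+1) → ℕ+ // Monotone y ∧ k.1 ≤ y 0} => g ⟨k, y⟩) := by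
      intro k
      simp only [hg]
      exact ((IH c' hc'1 hc'2 k.1).1).mul_left _
    have hfibsum : ∀ k : {k : ℕ+ // t ≤ k},
        ∑' y : {y : Fin (n+1) → ℕ+ // Monotone y ∧ k.1 ≤ y 0}, g ⟨k, y⟩
          ≤ 2^(n+1) * ((1:ℝ)/((k.1:ℕ):ℝ)^2) := by
      intro k
      have h1 : ∑' y : {y : Fin (n+1) → ℕ+ // Monotone y ∧ k.1 ≤ y 0}, g ⟨k, y⟩
          = ((1:ℝ)/((k.1:ℕ):ℝ)^(c 0)) * ∑' y : {y : Fin (n+1) → ℕ+ // Monotone y ∧ k.1 ≤ y 0},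
            tmx c' y.1 := by
        simp only [hg]
        exact tsum_mul_left
      rw [h1]
      have hT := (IH c' hc'1 hc'2 k.1).2
      have hT0 : 0 ≤ ∑' y : {y : Fin (n+1) → ℕ+ // Monotone y ∧ k.1 ≤ y 0}, tmx c' y.1 :=
        tsum_nonneg (fun y => tmx_nonneg _ _)
      have h2 : ((1:ℝ)/((k.1:ℕ):ℝ)^(c 0)) ≤ (1:ℝ)/((k.1:ℕ):ℝ) := pow_tail_le k.1 _ (hc1 0)
      have h3 : (0:ℝ) < ((k.1:ℕ):ℝ) := by positivity
      calc ((1:ℝ)/((k.1:ℕ):ℝ)^(c 0)) * _ ≤ ((1:ℝ)/((k.1:ℕ):ℝ)) * (2^(n+1) / ((k.1:ℕ):ℝ)) :=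
            mul_le_mul h2 hT hT0 (by positivity)
        _ = 2^(n+1) * ((1:ℝ)/((k.1:ℕ):ℝ)^2) := by field_simp
    have hmaj : Summable (fun k : {k : ℕ+ // t ≤ k} => 2^(n+1) * ((1:ℝ)/((k.1:ℕ):ℝ)^2)) :=
      (sq_tail t).1.mul_left _
    have houter : Summable (fun k : {k : ℕ+ // t ≤ k} =>
        ∑' y : {y : Fin (n+1) → ℕ+ // Monotone y ∧ k.1 ≤ y 0}, g ⟨k, y⟩) :=
      Summable.of_nonneg_of_le (fun k => tsum_nonneg (fun y => hg0 _)) hfibsum hmaj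
    have hsg : Summable g := (summable_sigma_of_nonneg hg0).2 ⟨hfib, houter⟩
    have hsf : Summable f := e.summable_iff.1 (by rw [hfg]; exact hsg)
    refine ⟨hsf, ?_⟩
    have h1 : ∑' x, f x = ∑' q, g q := by
      rw [← e.tsum_eq f]
      exact tsum_congr (fun q => congrFun hfg q)
    rw [h1, Summable.tsum_sigma hsg]
    calc ∑' k : {k : ℕ+ // t ≤ k}, ∑' y : {y : Fin (n+1) → ℕ+ // Monotone y ∧ k.1 ≤ y 0}, g ⟨k, y⟩
        ≤ ∑' k : {k : ℕ+ // t ≤ k}, 2^(n+1) * ((1:ℝ)/((k.1:ℕ):ℝ)^2) :=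
          Summable.tsum_le_tsum hfibsum houter hmaj
      _ = 2^(n+1) * ∑' k : {k : ℕ+ // t ≤ k}, (1:ℝ)/((k.1:ℕ):ℝ)^2 := tsum_mul_left
      _ ≤ 2^(n+1) * (2 / ((t:ℕ):ℝ)) := by
          apply mul_le_mul_of_nonneg_left (sq_tail t).2 (by positivity)
      _ = 2^(n+1+1) / ((t:ℕ):ℝ) := by ring

section KeyEquivs
variable (r' m' : ℕ)

def SetS : Set (({k : Fin (r'+1) → ℕ+ // StrictMono k}) × ({l : Fin (m'+1) → ℕ+ // Monotone l})) :=
  {p | p.1.1 0 ≤ p.2.1 0}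

def e1equiv :
    {p : (Fin (r'+1) → ℕ+) × (Fin (m'+1) → ℕ+) //
      StrictMono p.1 ∧ Monotone p.2 ∧
      ∀ (i : Fin (r'+1)) (j : Fin (m'+1)), i.1 = 0 → p.1 i ≤ p.2 j} ≃ ↥(SetS r' m') where
  toFun q := ⟨(⟨q.1.1, q.2.1⟩, ⟨q.1.2, q.2.2.1⟩), q.2.2.2 0 0 rfl⟩
  invFun p := ⟨(p.1.1.1, p.1.2.1), p.1.1.2, p.1.2.2, by
    intro i j hi
    have hi0 : i = 0 := Fin.ext hi
    have hp : p.1.1.1 0 ≤ p.1.2.1 0 := p.2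
    rw [hi0]
    exact le_trans hp (p.1.2.2 (Fin.zero_le j))⟩
  left_inv q := rfl
  right_inv p := rfl

def e2equiv :
    {p : (Fin (r'+2) → ℕ+) × (Fin m' → ℕ+) //
      StrictMono p.1 ∧ Monotone p.2 ∧
      ∀ (i : Fin (r'+2)) (j : Fin m'), i.1 = 0 → p.1 i ≤ p.2 j} ≃ ↥(SetS r' m')ᶜ where
  toFun q := ⟨(⟨fun i => q.1.1 i.succ, fun i j hij => q.2.1 (Fin.succ_lt_succ_iff.2 hij)⟩,
      ⟨Fin.cons (q.1.1 0) q.1.2, by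
        apply cons_mono q.2.2.1
        intro j
        exact q.2.2.2 0 j rfl⟩), by
    intro hle
    exact absurd (show q.1.1 (Fin.succ 0) ≤ q.1.1 0 from hle)
      (not_le.2 (q.2.1 (Fin.succ_pos 0)))⟩
  invFun p := ⟨(Fin.cons (p.1.2.1 0) p.1.1.1, fun j => p.1.2.1 j.succ), by
    refine ⟨?_, ?_, ?_⟩
    · apply cons_strictMono p.1.1.2
      intro j
      have hp : p.1.2.1 0 < p.1.1.1 0 :=
        not_le.1 (show ¬ (p.1.1.1 0 ≤ p.1.2.1 0) from p.2)
      exact lt_of_lt_of_le hp (p.1.1.2.monotone (Fin.zero_le j))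
    · exact fun i j hij => p.1.2.2 (Fin.succ_le_succ_iff.2 hij)
    · intro i j hi
      have hi0 : i = 0 := Fin.ext hi
      rw [hi0]
      exact p.1.2.2 (Fin.zero_le _)⟩
  left_inv q := by
    apply Subtype.ext
    apply Prod.ext
    · exact Fin.cons_self_tail q.1.1
    · rfl
  right_inv p := by
    apply Subtype.ext
    apply Prod.ext
    · apply Subtype.ext; rfl
    · apply Subtype.ext; exact Fin.cons_self_tail p.1.2.1

end KeyEquivs

set_option maxHeartbeats 1000000 in
lemma mono_summable {n : ℕ} (c : Fin (n+1) → ℕ) (hc1 : ∀ i, 1 ≤ c i) (hc2 : 2 ≤ c (Fin.last n)) :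
    Summable (fun x : {x : Fin (n+1) → ℕ+ // Monotone x} => tmx c x.1) := by
  have h := (mono_tail n c hc1 hc2 1).1
  have hinj : Function.Injective (fun x : {x : Fin (n+1) → ℕ+ // Monotone x} =>
      (⟨x.1, x.2, (x.1 0).one_le⟩ : {x : Fin (n+1) → ℕ+ // Monotone x ∧ (1:ℕ+) ≤ x 0})) := by
    intro u v huv
    apply Subtype.ext
    have h2 := congrArg Subtype.val huv
    exact h2
  exact (h.comp_injective hinj).congr (fun z => rfl)

set_option maxHeartbeats 1000000 in
lemma strict_summable {n : ℕ} (c : Fin (n+1) → ℕ) (hc1 : ∀ i, 1 ≤ c i) (hc2 : 2 ≤ c (Fin.last n)) :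
    Summable (fun x : {x : Fin (n+1) → ℕ+ // StrictMono x} => tmx c x.1) := by
  have h := mono_summable c hc1 hc2
  have hinj : Function.Injective (fun x : {x : Fin (n+1) → ℕ+ // StrictMono x} =>
      (⟨x.1, x.2.monotone⟩ : {x : Fin (n+1) → ℕ+ // Monotone x})) :=
    by
      intro u v huv
      apply Subtype.ext
      have h2 := congrArg Subtype.val huv
      exact h2
  exact (h.comp_injective hinj).congr (fun z => rfl)

set_option maxHeartbeats 1000000 in
theorem key_lemma (x y : ℕ) (A C : List ℕ)
    (hA1 : ∀ i : Fin (A.length + 1), 1 ≤ (x::A).get i)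
    (hA2 : 2 ≤ (x::A).get (Fin.last A.length))
    (hC1 : ∀ j : Fin (C.length + 1), 1 ≤ (y::C).get j)
    (hC2 : 2 ≤ (y::C).get (Fin.last C.length)) :
    mz (x::A) * mzs (y::C) = ZL (x::A) (y::C) + ZL (y::x::A) C := by
  classical
  set F : {k : Fin (A.length+1) → ℕ+ // StrictMono k} → ℝ :=
    fun k => tmx ((x::A).get) k.1 with hF
  set G : {l : Fin (C.length+1) → ℕ+ // Monotone l} → ℝ :=
    fun l => tmx ((y::C).get) l.1 with hG
  set h : ({k : Fin (A.length+1) → ℕ+ // StrictMono k} × {l : Fin (C.length+1) → ℕ+ // Monotone l}) → ℝ :=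
    fun p => F p.1 * G p.2 with hh
  have hsF : Summable F := strict_summable _ hA1 hA2
  have hsG : Summable G := mono_summable _ hC1 hC2
  have hF0 : 0 ≤ F := fun k => tmx_nonneg _ _
  have hG0 : 0 ≤ G := fun l => tmx_nonneg _ _
  have hsH : Summable h := hsF.mul_of_nonneg hsG hF0 hG0
  have step1 : mz (x::A) * mzs (y::C) = ∑' p, h p := by
    rw [show mz (x::A) = ∑' k, F k from rfl, show mzs (y::C) = ∑' l, G l from rfl]
    exact Summable.tsum_mul_tsum hsF hsG hsH
  have split : (∑' p, h p) =
      (∑' p : ↥(SetS A.length C.length), h ↑p) + ∑' p : ↥(SetS A.length C.length)ᶜ, h ↑p :=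
    (Summable.tsum_subtype_add_tsum_subtype_compl hsH _).symm
  have eq1 : (∑' p : ↥(SetS A.length C.length), h ↑p) = ZL (x::A) (y::C) := by
    rw [← Equiv.tsum_eq (e1equiv A.length C.length)
      (fun p : ↥(SetS A.length C.length) => h ↑p)]
    exact tsum_congr fun q => rfl
  have eq2 : (∑' p : ↥(SetS A.length C.length)ᶜ, h ↑p) = ZL (y::x::A) C := by
    rw [← Equiv.tsum_eq (e2equiv A.length C.length)
      (fun p : ↥(SetS A.length C.length)ᶜ => h ↑p)]
    apply tsum_congr
    intro q
    show tmx ((x::A).get) (fun i => q.1.1 i.succ) * tmx ((y::C).get) (Fin.cons (q.1.1 0) q.1.2)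
       = tmx ((y::x::A).get) q.1.1 * tmx (C.get) q.1.2
    rw [tmx_cons ((y::C).get) (q.1.1 0) q.1.2]
    rw [tmx_split ((y::x::A).get) q.1.1]
    show tmx ((x::A).get) (fun i => q.1.1 i.succ) *
        (((1:ℝ)/(((q.1.1 0 : ℕ+) : ℕ):ℝ)^y) * tmx (C.get) q.1.2)
      = (((1:ℝ)/(((q.1.1 0 : ℕ+) : ℕ):ℝ)^y) * tmx ((x::A).get) (fun i => q.1.1 i.succ)) *
        tmx (C.get) q.1.2
    ring
  rw [step1, split, eq1, eq2]

set_option maxHeartbeats 1000000 in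
theorem key2 (r' m' : ℕ) (a : Fin (r'+1) → ℕ) (b : Fin (m'+1) → ℕ)
    (hapos : ∀ i, 1 ≤ a i) (hbpos : ∀ j, 1 ≤ b j)
    (har : 2 ≤ a (Fin.last r')) (hbm : 2 ≤ b (Fin.last m')) :
    mz (List.ofFn a) * mzs (List.ofFn b) =
      ZL (List.ofFn a) (List.ofFn b) +
      ZL (b 0 :: List.ofFn a) (List.ofFn (fun j : Fin m' => b j.succ)) := by
  have h1 : List.ofFn a = a 0 :: List.ofFn (fun i => a i.succ) := List.ofFn_succ (f := a)
  have h2 : List.ofFn b = b 0 :: List.ofFn (fun j => b j.succ) := List.ofFn_succ (f := b)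
  have hAl : (List.ofFn (fun i : Fin r' => a i.succ)).length = r' := List.length_ofFn
  have hCl : (List.ofFn (fun j : Fin m' => b j.succ)).length = m' := List.length_ofFn
  have hA1 : ∀ i : Fin ((List.ofFn (fun i : Fin r' => a i.succ)).length + 1),
      1 ≤ (a 0 :: List.ofFn (fun i => a i.succ)).get i := by
    intro i
    generalize hv : (a 0 :: List.ofFn fun i => a i.succ).get i = v
    have hm : v ∈ a 0 :: List.ofFn (fun i => a i.succ) := hv ▸ List.get_mem _ _
    rw [← h1] at hm
    obtain ⟨i', rfl⟩ := List.mem_ofFn.1 hm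
    exact hapos i'
  have hC1 : ∀ j : Fin ((List.ofFn (fun j : Fin m' => b j.succ)).length + 1),
      1 ≤ (b 0 :: List.ofFn (fun j => b j.succ)).get j := by
    intro j
    generalize hv : (b 0 :: List.ofFn fun j => b j.succ).get j = v
    have hm : v ∈ b 0 :: List.ofFn (fun j => b j.succ) := hv ▸ List.get_mem _ _
    rw [← h2] at hm
    obtain ⟨j', rfl⟩ := List.mem_ofFn.1 hm
    exact hbpos j'
  have hA2 : 2 ≤ (a 0 :: List.ofFn (fun i => a i.succ)).get
      (Fin.last ((List.ofFn (fun i : Fin r' => a i.succ)).length)) := by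
    have e1 : (a 0 :: List.ofFn (fun i => a i.succ)).get
        (Fin.last ((List.ofFn (fun i : Fin r' => a i.succ)).length))
        = (List.ofFn a).get (Fin.cast (by simp)
          (Fin.last ((List.ofFn (fun i : Fin r' => a i.succ)).length))) :=
      List.get_of_eq h1.symm _
    rw [e1, List.get_ofFn]
    have hidx : (Fin.cast (List.length_ofFn (f := a)) (Fin.cast (by simp)
        (Fin.last ((List.ofFn (fun i : Fin r' => a i.succ)).length)))) = Fin.last r' := by
      apply Fin.ext
      simp [hAl]
    rw [hidx]
    exact har
  have hC2 : 2 ≤ (b 0 :: List.ofFn (fun j => b j.succ)).get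
      (Fin.last ((List.ofFn (fun j : Fin m' => b j.succ)).length)) := by
    have e1 : (b 0 :: List.ofFn (fun j => b j.succ)).get
        (Fin.last ((List.ofFn (fun j : Fin m' => b j.succ)).length))
        = (List.ofFn b).get (Fin.cast (by simp)
          (Fin.last ((List.ofFn (fun j : Fin m' => b j.succ)).length))) :=
      List.get_of_eq h2.symm _
    rw [e1, List.get_ofFn]
    have hidx : (Fin.cast (List.length_ofFn (f := b)) (Fin.cast (by simp)
        (Fin.last ((List.ofFn (fun j : Fin m' => b j.succ)).length)))) = Fin.last m' := by
      apply Fin.ext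
      simp [hCl]
    rw [hidx]
    exact hbm
  rw [h1, h2]
  exact key_lemma (a 0) (b 0) _ _ hA1 hA2 hC1 hC2

set_option maxHeartbeats 1000000 in
/-- For tuples of positive integers with `r, m ≥ 1`, `α_r ≥ 2`, `β_m ≥ 2`:
`ζ(α) ζ⋆(β) = Z_L(α₁,…,α_r; β₁,…,β_m) + Z_L(β₁,α₁,…,α_r; β₂,…,β_m)`. -/
theorem mz_mul_mzs_eq_ZL (r m : ℕ) (hr : 1 ≤ r) (hm : 1 ≤ m)
    (a : Fin r → ℕ) (b : Fin m → ℕ)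
    (hapos : ∀ i, 1 ≤ a i) (hbpos : ∀ j, 1 ≤ b j)
    (har : 2 ≤ a ⟨r - 1, by omega⟩) (hbm : 2 ≤ b ⟨m - 1, by omega⟩) :
    mz (List.ofFn a) * mzs (List.ofFn b) =
      ZL (List.ofFn a) (List.ofFn b) +
      ZL (List.ofFn (Fin.cons (b ⟨0, by omega⟩) a))
         (List.ofFn (fun j : Fin (m - 1) => b ⟨j.1 + 1, by have := j.isLt; omega⟩)) := by
  cases r with
  | zero => omega
  | succ r' =>
  cases m with
  | zero => omega
  | succ m' =>
  have h3 : List.ofFn (Fin.cons (b ⟨0, by omega⟩) a) = b 0 :: List.ofFn a := by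
    rw [List.ofFn_succ]
    refine congrArg₂ List.cons ?_ ?_
    · exact Fin.cons_zero _ _
    · refine congrArg (fun g : Fin (r' + 1) → ℕ => List.ofFn g) ?_
      funext i
      exact Fin.cons_succ _ _ _
  have h4 : List.ofFn (fun j : Fin (m' + 1 - 1) => b ⟨j.1 + 1, by have := j.isLt; omega⟩)
      = List.ofFn (fun j : Fin m' => b j.succ) := rfl
  rw [h3, h4]
  exact key2 r' m' a b hapos hbpos har hbm
end

section
/- Let (α_1, …, α_r) be a tuple of positive integers with α_r ≥ 2 and let 1 ≤ m ≤ r − 1. Then Z_B(α_{m+1}, …, α_r; α_m, …, α_1) = (-1)^m · ζ(α_1, …, α_r) + ∑_{k=1}^{m} (-1)^{m-k} · Z_U(α_{k+1}, …, α_r; α_k, …, α_1). -/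
open scoped BigOperators

set_option maxHeartbeats 1000000

open Filter Asymptotics Real in
lemma aux_summable_log_pow (t : ℕ) :
    Summable (fun K : ℕ => (1 + Real.log K) ^ t / (K : ℝ) ^ 2) := by
  have hr : (0:ℝ) < 1 / (2 * (t+1)) := by positivity
  have hlog : ∀ᶠ x : ℝ in atTop, ‖Real.log x‖ ≤ 1 * ‖x ^ (1 / (2 * (t+1) : ℝ))‖ :=
    (isLittleO_log_rpow_atTop hr).def one_pos
  have hsum : Summable (fun n : ℕ => (2:ℝ)^t * (n : ℝ) ^ (-(3/2) : ℝ)) :=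
    (Real.summable_nat_rpow.2 (by norm_num)).mul_left _
  refine Summable.of_norm_bounded_eventually_nat hsum ?_
  have h1 : ∀ᶠ n : ℕ in atTop, ‖Real.log (n:ℝ)‖ ≤ 1 * ‖(n:ℝ) ^ (1 / (2 * (t+1) : ℝ))‖ :=
    (tendsto_natCast_atTop_atTop).eventually hlog
  have h2 : ∀ᶠ n : ℕ in atTop, (3:ℕ) ≤ n := eventually_ge_atTop 3
  filter_upwards [h1, h2] with n hn hn3
  have hn1 : (1:ℝ) ≤ (n:ℝ) := by exact_mod_cast Nat.one_le_iff_ne_zero.2 (by omega)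
  have hnpos : (0:ℝ) < (n:ℝ) := by linarith
  have hlogn : 1 ≤ Real.log n := by
    rw [show (1:ℝ) = Real.log (Real.exp 1) from (Real.log_exp 1).symm]
    apply Real.log_le_log (Real.exp_pos 1)
    calc Real.exp 1 ≤ 2.7182818286 := Real.exp_one_lt_d9.le
      _ ≤ (3:ℝ) := by norm_num
      _ ≤ (n:ℝ) := by exact_mod_cast hn3
  have hlogpos : (0:ℝ) < Real.log n := by linarith
  have hle : Real.log n ≤ (n:ℝ) ^ (1 / (2 * (t+1) : ℝ)) := by
    rw [Real.norm_eq_abs, Real.norm_eq_abs, abs_of_pos hlogpos, one_mul,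
      abs_of_pos (Real.rpow_pos_of_pos hnpos _)] at hn
    exact hn
  have key : (1 + Real.log n) ^ t ≤ 2^t * (n:ℝ) ^ ((1:ℝ)/2) := by
    calc (1 + Real.log n) ^ t ≤ (2 * Real.log n) ^ t := by
          apply pow_le_pow_left₀ (by linarith) (by linarith)
      _ = 2^t * (Real.log n)^t := mul_pow _ _ _
      _ ≤ 2^t * ((n:ℝ) ^ (1 / (2 * (t+1) : ℝ)))^t := by
          apply mul_le_mul_of_nonneg_left (pow_le_pow_left₀ hlogpos.le hle t) (by positivity)
      _ = 2^t * (n:ℝ) ^ ((1 / (2 * (t+1) : ℝ)) * t) := by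
          rw [← Real.rpow_natCast ((n:ℝ) ^ _) t, ← Real.rpow_mul hnpos.le]
      _ ≤ 2^t * (n:ℝ) ^ ((1:ℝ)/2) := by
          apply mul_le_mul_of_nonneg_left _ (by positivity)
          apply Real.rpow_le_rpow_of_exponent_le hn1
          rw [div_mul_eq_mul_div, one_mul, div_le_div_iff₀ (by positivity) (by norm_num)]
          push_cast; linarith [Nat.cast_nonneg (α := ℝ) t]
  rw [Real.norm_eq_abs, abs_div, abs_of_nonneg (by positivity), abs_of_nonneg (by positivity)]
  rw [div_le_iff₀ (by positivity)]
  calc (1 + Real.log n) ^ t ≤ 2^t * (n:ℝ) ^ ((1:ℝ)/2) := key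
    _ = 2^t * (n:ℝ) ^ (-(3/2) : ℝ) * (n:ℝ)^2 := by
        rw [mul_assoc]
        congr 1
        rw [← Real.rpow_natCast (n:ℝ) 2, ← Real.rpow_add hnpos]
        norm_num

lemma sum_pi_prod {S : Type*} [Fintype S] (t : ℕ) (g : S → ℝ) :
    ∑ f : Fin t → S, ∏ i, g (f i) = (∑ s : S, g s) ^ t := by
  induction t with
  | zero => simp
  | succ n ih =>
    rw [← ((Fin.consEquiv (fun _ : Fin (n+1) => S)).sum_comp (fun f => ∏ i, g (f i)))]
    have : ∀ p : S × (Fin n → S), (∏ i, g ((Fin.consEquiv (fun _ : Fin (n+1) => S)) p i))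
        = g p.1 * ∏ i, g (p.2 i) := by
      intro p
      rw [Fin.prod_univ_succ]
      simp [Fin.consEquiv]
    rw [Finset.sum_congr rfl (fun p _ => this p), Fintype.sum_prod_type]
    simp_rw [← Finset.mul_sum, ← Finset.sum_mul, ih]
    ring

def equivIicPNat (K : ℕ+) : {j : ℕ+ // j ≤ K} ≃ Fin K where
  toFun j := ⟨(j.1 : ℕ) - 1, by
    have h1 : 0 < (j.1 : ℕ) := j.1.2
    have h2 : (j.1 : ℕ) ≤ (K : ℕ) := j.2
    omega⟩
  invFun i := ⟨⟨i.1 + 1, Nat.succ_pos _⟩, by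
    have := i.2
    exact (PNat.coe_le_coe _ K).mp (show i.1 + 1 ≤ (K:ℕ) by omega)⟩
  left_inv j := by
    have h1 : 0 < (j.1 : ℕ) := j.1.2
    apply Subtype.ext; apply PNat.coe_injective
    show ((j.1 : ℕ) - 1) + 1 = (j.1 : ℕ)
    omega
  right_inv i := by apply Fin.ext; show ((i.1 + 1) - 1) = i.1; omega

instance fintypeIicPNat (K : ℕ+) : Fintype {j : ℕ+ // j ≤ K} :=
  Fintype.ofEquiv _ (equivIicPNat K).symm



lemma sum_inv_le_one_add_log (K : ℕ+) :
    ∑ j : {j : ℕ+ // j ≤ K}, (1:ℝ) / ((j : ℕ+) : ℕ) ≤ 1 + Real.log ((K : ℕ) : ℝ) := by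
  have key : ∑ j : {j : ℕ+ // j ≤ K}, (1:ℝ) / ((j.1 : ℕ) : ℝ)
      = ∑ i ∈ Finset.range (K:ℕ), (1:ℝ)/((i:ℝ)+1) := by
    refine Finset.sum_bij' (i := fun j _ => (j.1 : ℕ) - 1)
      (j := fun i hi => ⟨⟨i + 1, Nat.succ_pos _⟩, by
        have h : i < (K:ℕ) := Finset.mem_range.mp hi
        exact (PNat.coe_le_coe _ K).mp (show i + 1 ≤ (K:ℕ) by omega)⟩) ?_ ?_ ?_ ?_ ?_
    · intro a _
      have h1 : 0 < (a.1 : ℕ) := a.1.2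
      have h2 : (a.1:ℕ) ≤ (K:ℕ) := a.2
      simp only [Finset.mem_range]
      omega
    · intro i _; exact Finset.mem_univ _
    · intro a _
      have h1 : 0 < (a.1 : ℕ) := a.1.2
      apply Subtype.ext; apply PNat.coe_injective
      show ((a.1:ℕ) - 1) + 1 = (a.1:ℕ)
      omega
    · intro i _; rfl
    · intro a _
      have h1 : 0 < (a.1 : ℕ) := a.1.2
      congr 1
      have h3 : ((a.1 : ℕ) - 1 : ℕ) + 1 = (a.1 : ℕ) := by omega
      rw [← h3]; push_cast; ring
  calc ∑ j : {j : ℕ+ // j ≤ K}, (1:ℝ) / ((j : ℕ+) : ℕ)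
      = ∑ i ∈ Finset.range (K:ℕ), (1:ℝ)/((i:ℝ)+1) := key
    _ = (harmonic (K:ℕ) : ℝ) := by
        rw [harmonic]
        push_cast
        apply Finset.sum_congr rfl
        intro i _
        rw [one_div]
    _ ≤ 1 + Real.log ((K:ℕ):ℝ) := harmonic_le_one_add_log _

lemma summable_master (n m : ℕ) (A : Fin (n+1) → ℕ) (B : Fin m → ℕ)
    (hA : ∀ i, 1 ≤ A i) (hB : ∀ j, 1 ≤ B j) (hlast : 2 ≤ A (Fin.last n)) :
    Summable (fun p : {p : (Fin (n+1) → ℕ+) × (Fin m → ℕ+) //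
        StrictMono p.1 ∧ Monotone p.2 ∧ ∀ j, p.2 j ≤ p.1 (Fin.last n)} =>
      (∏ i, (1 : ℝ) / ((p.1.1 i : ℕ) : ℝ) ^ A i) *
        ∏ j, (1 : ℝ) / ((p.1.2 j : ℕ) : ℝ) ^ B j) := by
  set T := {p : (Fin (n+1) → ℕ+) × (Fin m → ℕ+) //
      StrictMono p.1 ∧ Monotone p.2 ∧ ∀ j, p.2 j ≤ p.1 (Fin.last n)} with hT
  set f : T → ℝ := fun p => (∏ i, (1 : ℝ) / ((p.1.1 i : ℕ) : ℝ) ^ A i) *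
        ∏ j, (1 : ℝ) / ((p.1.2 j : ℕ) : ℝ) ^ B j with hf
  have hf0 : ∀ p : T, 0 ≤ f p := fun p => by
    apply mul_nonneg (Finset.prod_nonneg fun i _ => by positivity)
      (Finset.prod_nonneg fun j _ => by positivity)
  show Summable f
  have hbound : ∀ (t : T) (i : Fin (n+1)), t.1.1 i ≤ t.1.1 (Fin.last n) :=
    fun t i => t.2.1.monotone (Fin.le_last i)
  have hbound2 : ∀ (t : T) (j : Fin m), t.1.2 j ≤ t.1.1 (Fin.last n) :=
    fun t j => t.2.2.2 j
  let g : T → ℕ+ := fun p => p.1.1 (Fin.last n)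
  rw [← Equiv.summable_iff (Equiv.sigmaFiberEquiv g)]
  have key : ∀ x : (Σ K : ℕ+, {t : T // g t = K}), 0 ≤ (f ∘ (Equiv.sigmaFiberEquiv g)) x :=
    fun x => hf0 _
  rw [summable_sigma_of_nonneg key]
  have hfin : ∀ K : ℕ+, Finite {t : T // g t = K} := by
    intro K
    let Φ : {t : T // g t = K} → (Fin (n+1) → {j : ℕ+ // j ≤ K}) × (Fin m → {j : ℕ+ // j ≤ K}) :=
      fun t => (fun i => ⟨t.1.1.1 i, le_trans (hbound t.1 i) (le_of_eq t.2)⟩,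
        fun j => ⟨t.1.1.2 j, le_trans (hbound2 t.1 j) (le_of_eq t.2)⟩)
    have hΦ : Function.Injective Φ := by
      intro t t' h
      obtain ⟨h1, h2⟩ := Prod.mk.injEq .. ▸ h
      apply Subtype.ext; apply Subtype.ext; apply Prod.ext
      · funext i; exact congrArg Subtype.val (congrFun h1 i)
      · funext j; exact congrArg Subtype.val (congrFun h2 j)
    exact Finite.of_injective Φ hΦ
  constructor
  · intro K
    have := hfin K
    exact Summable.of_finite
  · have hb : ∀ K : ℕ+, (∑' y : {t : T // g t = K}, (f ∘ (Equiv.sigmaFiberEquiv g)) ⟨K, y⟩)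
        ≤ (1 + Real.log ((K:ℕ):ℝ)) ^ (n + m) / ((K:ℕ):ℝ) ^ 2 := by
      intro K
      have := hfin K
      have hK1 : (1:ℝ) ≤ ((K:ℕ):ℝ) := by exact_mod_cast K.2
      have hKpos : (0:ℝ) < ((K:ℕ):ℝ) := by linarith
      set D := {j : ℕ+ // j ≤ K} with hD
      let ι : {t : T // g t = K} → (Fin n → D) × (Fin m → D) :=
        fun t => (fun i => ⟨t.1.1.1 i.castSucc, le_trans (hbound t.1 i.castSucc) (le_of_eq t.2)⟩,
          fun j => ⟨t.1.1.2 j, le_trans (hbound2 t.1 j) (le_of_eq t.2)⟩)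
      have hι : Function.Injective ι := by
        intro t t' h
        obtain ⟨h1, h2⟩ := Prod.mk.injEq .. ▸ h
        apply Subtype.ext; apply Subtype.ext; apply Prod.ext
        · funext i
          induction i using Fin.lastCases with
          | last => exact t.2.trans t'.2.symm
          | cast i => exact congrArg Subtype.val (congrFun h1 i)
        · funext j; exact congrArg Subtype.val (congrFun h2 j)
      have hle : ∀ y : {t : T // g t = K}, f y.1 ≤
          ((∏ i : Fin n, (1:ℝ) / ((((ι y).1 i : ℕ+) : ℕ) : ℝ)) * ((1:ℝ) / ((K:ℕ):ℝ) ^ 2)) *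
            ∏ j : Fin m, (1:ℝ) / ((((ι y).2 j : ℕ+) : ℕ) : ℝ) := by
        intro y
        have e1 : ∀ i : Fin (n+1), (1:ℝ) ≤ ((y.1.1.1 i : ℕ) : ℝ) := by
          intro i; exact Nat.one_le_cast.mpr (y.1.1.1 i).2
        have e2 : ∀ j : Fin m, (1:ℝ) ≤ ((y.1.1.2 j : ℕ) : ℝ) := by
          intro j; exact Nat.one_le_cast.mpr (y.1.1.2 j).2
        show (∏ i : Fin (n+1), (1:ℝ) / ((y.1.1.1 i : ℕ) : ℝ) ^ A i) *
            ∏ j : Fin m, (1:ℝ) / ((y.1.1.2 j : ℕ) : ℝ) ^ B j ≤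
          ((∏ i : Fin n, (1:ℝ) / ((y.1.1.1 i.castSucc : ℕ) : ℝ)) * ((1:ℝ) / ((K:ℕ):ℝ) ^ 2)) *
            ∏ j : Fin m, (1:ℝ) / ((y.1.1.2 j : ℕ) : ℝ)
        apply mul_le_mul ?_ ?_ (Finset.prod_nonneg fun j _ => by positivity) ?_
        · rw [Fin.prod_univ_castSucc]
          apply mul_le_mul ?_ ?_ (by positivity) (Finset.prod_nonneg fun i _ => by positivity)
          · apply Finset.prod_le_prod (fun i _ => by positivity)
            intro i _
            apply one_div_le_one_div_of_le (by linarith [e1 i.castSucc])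
            exact le_self_pow₀ (e1 i.castSucc) (Nat.one_le_iff_ne_zero.mp (hA i.castSucc))
          · have hyK : ((y.1.1.1 (Fin.last n) : ℕ) : ℝ) = ((K:ℕ):ℝ) := by
              exact_mod_cast congrArg (fun x : ℕ+ => ((x:ℕ):ℝ)) y.2
            rw [hyK]
            apply one_div_le_one_div_of_le (by positivity)
            exact pow_le_pow_right₀ hK1 hlast
        · apply Finset.prod_le_prod (fun j _ => by positivity)
          intro j _
          apply one_div_le_one_div_of_le (by linarith [e2 j])
          exact le_self_pow₀ (e2 j) (Nat.one_le_iff_ne_zero.mp (hB j))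
        · apply mul_nonneg (Finset.prod_nonneg fun i _ => by positivity) (by positivity)
      calc (∑' y : {t : T // g t = K}, (f ∘ (Equiv.sigmaFiberEquiv g)) ⟨K, y⟩)
          = ∑' y : {t : T // g t = K}, f y.1 := rfl
        _ ≤ ∑' uv : (Fin n → D) × (Fin m → D),
              ((∏ i : Fin n, (1:ℝ) / (((uv.1 i : ℕ+) : ℕ) : ℝ)) * ((1:ℝ) / ((K:ℕ):ℝ) ^ 2)) *
                ∏ j : Fin m, (1:ℝ) / (((uv.2 j : ℕ+) : ℕ) : ℝ) := by
            apply Summable.tsum_le_tsum_of_inj ι hι ?_ hle Summable.of_finite Summable.of_finite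
            intro c _
            apply mul_nonneg (mul_nonneg (Finset.prod_nonneg fun i _ => by positivity)
              (by positivity)) (Finset.prod_nonneg fun j _ => by positivity)
        _ = (((∑ s : D, (1:ℝ)/((s.1:ℕ):ℝ)) ^ n) * ((1:ℝ)/((K:ℕ):ℝ)^2)) *
              (∑ s : D, (1:ℝ)/((s.1:ℕ):ℝ)) ^ m := by
            rw [tsum_fintype, Fintype.sum_prod_type]
            have step : ∀ u : Fin n → D,
                (∑ v : Fin m → D, ((∏ i : Fin n, (1:ℝ) / (((u i : ℕ+) : ℕ) : ℝ)) *
                  ((1:ℝ) / ((K:ℕ):ℝ) ^ 2)) * ∏ j : Fin m, (1:ℝ) / (((v j : ℕ+) : ℕ) : ℝ))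
                = ((∏ i : Fin n, (1:ℝ) / (((u i : ℕ+) : ℕ) : ℝ)) * ((1:ℝ) / ((K:ℕ):ℝ) ^ 2)) *
                  ∑ v : Fin m → D, ∏ j : Fin m, (1:ℝ) / (((v j : ℕ+) : ℕ) : ℝ) :=
              fun u => by rw [← Finset.mul_sum]
            rw [Finset.sum_congr rfl (fun u _ => step u), ← Finset.sum_mul, ← Finset.sum_mul,
              sum_pi_prod n (fun s : D => (1:ℝ)/((s.1:ℕ):ℝ)),
              sum_pi_prod m (fun s : D => (1:ℝ)/((s.1:ℕ):ℝ))]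
        _ ≤ (((1 + Real.log ((K:ℕ):ℝ)) ^ n) * ((1:ℝ)/((K:ℕ):ℝ)^2)) *
              (1 + Real.log ((K:ℕ):ℝ)) ^ m := by
            have hH0 : (0:ℝ) ≤ ∑ s : D, (1:ℝ)/((s.1:ℕ):ℝ) :=
              Finset.sum_nonneg (fun s _ => by positivity)
            have hH : ∑ s : D, (1:ℝ)/((s.1:ℕ):ℝ) ≤ 1 + Real.log ((K:ℕ):ℝ) :=
              sum_inv_le_one_add_log K
            have hL0 : (0:ℝ) ≤ 1 + Real.log ((K:ℕ):ℝ) := by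
              have := Real.log_nonneg hK1; linarith
            apply mul_le_mul (mul_le_mul (pow_le_pow_left₀ hH0 hH n) le_rfl (by positivity)
              (by positivity)) (pow_le_pow_left₀ hH0 hH m) (by positivity)
            positivity
        _ = (1 + Real.log ((K:ℕ):ℝ)) ^ (n + m) / ((K:ℕ):ℝ) ^ 2 := by
            rw [pow_add]; ring
    apply Summable.of_nonneg_of_le (fun K => tsum_nonneg (fun y => key ⟨K, y⟩)) hb
    exact Summable.comp_injective (aux_summable_log_pow (n + m)) PNat.coe_injective

lemma summable_ZU (a b : List ℕ) (ha : a ≠ []) (h1 : ∀ z ∈ a, 1 ≤ z)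
    (h2 : ∀ z ∈ b, 1 ≤ z) (hlast : 2 ≤ a.getLast ha) :
    Summable (fun p : {p : (Fin a.length → ℕ+) × (Fin b.length → ℕ+) //
        StrictMono p.1 ∧ Monotone p.2 ∧
        ∀ (i : Fin a.length) (j : Fin b.length), i.1 = a.length - 1 → p.2 j ≤ p.1 i} =>
      (∏ i, (1 : ℝ) / ((p.1.1 i : ℕ) : ℝ) ^ a.get i) *
        ∏ j, (1 : ℝ) / ((p.1.2 j : ℕ) : ℝ) ^ b.get j) := by
  obtain ⟨x, a', rfl⟩ := List.exists_cons_of_ne_nil ha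
  have hiff : ∀ p : (Fin (x :: a').length → ℕ+) × (Fin b.length → ℕ+),
      (StrictMono p.1 ∧ Monotone p.2 ∧
        ∀ (i : Fin (x :: a').length) (j : Fin b.length), i.1 = (x :: a').length - 1 → p.2 j ≤ p.1 i)
      ↔ (StrictMono p.1 ∧ Monotone p.2 ∧ ∀ j, p.2 j ≤ p.1 (Fin.last a'.length)) := by
    intro p
    constructor
    · rintro ⟨hs, hm, hc⟩
      exact ⟨hs, hm, fun j => hc (Fin.last a'.length) j rfl⟩
    · rintro ⟨hs, hm, hc⟩
      refine ⟨hs, hm, fun i j hi => ?_⟩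
      have : i = Fin.last a'.length := Fin.ext hi
      rw [this]
      exact hc j
  have master := summable_master a'.length b.length ((x :: a').get) b.get
    (fun i => h1 _ (List.get_mem (x :: a') i))
    (fun j => h2 _ (List.get_mem b j))
    (by
      rw [List.getLast_eq_getElem] at hlast
      exact hlast)
  have := (Equiv.summable_iff (Equiv.subtypeEquivRight hiff)).mpr master
  exact this.congr (fun p => rfl)

def zbNilEquiv (a : List ℕ) : {k : Fin a.length → ℕ+ // StrictMono k} ≃
    {p : (Fin a.length → ℕ+) × (Fin (List.length ([] : List ℕ)) → ℕ+) //
      StrictMono p.1 ∧ Monotone p.2 ∧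
      (∀ (i : Fin a.length) (j : Fin (List.length ([] : List ℕ))), i.1 = 0 → p.1 i ≤ p.2 j) ∧
      ∀ (i : Fin a.length) (j : Fin (List.length ([] : List ℕ))),
        i.1 = a.length - 1 → p.2 j ≤ p.1 i} where
  toFun k := ⟨(k.1, fun j => j.elim0), k.2, fun j => j.elim0, fun i j => j.elim0,
    fun i j => j.elim0⟩
  invFun p := ⟨p.1.1, p.2.1⟩
  left_inv k := rfl
  right_inv p := by
    apply Subtype.ext
    apply Prod.ext
    · rfl
    · funext j; exact j.elim0

lemma ZB_nil (a : List ℕ) : ZB a [] = mz a := by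
  rw [ZB, mz, ← Equiv.tsum_eq (zbNilEquiv a)]
  apply tsum_congr
  intro k
  show (∏ i, (1 : ℝ) / ((k.1 i : ℕ) : ℝ) ^ a.get i) *
      ∏ j : Fin (List.length ([] : List ℕ)), (1 : ℝ) / (((fun j : Fin (List.length ([] : List ℕ)) => j.elim0 (α := ℕ+)) j : ℕ) : ℝ) ^ ([] : List ℕ).get j
    = ∏ i, (1 : ℝ) / ((k.1 i : ℕ) : ℝ) ^ a.get i
  haveI : IsEmpty (Fin (List.length ([] : List ℕ))) := Fin.isEmpty
  rw [show (∏ j : Fin (List.length ([] : List ℕ)), (1 : ℝ) /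
      (((fun j : Fin (List.length ([] : List ℕ)) => j.elim0 (α := ℕ+)) j : ℕ) : ℝ) ^
      ([] : List ℕ).get j) = 1 from by rw [Finset.univ_eq_empty, Finset.prod_empty], mul_one]

def splitEquiv (c : ℕ) (a d : List ℕ) (h0 : 0 < a.length) :
    {q : (Fin (a.length + 1) → ℕ+) × (Fin d.length → ℕ+) //
      StrictMono q.1 ∧ Monotone q.2 ∧
      (∀ (i : Fin (a.length + 1)) (j : Fin d.length), i.1 = 0 → q.1 i ≤ q.2 j) ∧
      ∀ (i : Fin (a.length + 1)) (j : Fin d.length),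
        i.1 = (a.length + 1) - 1 → q.2 j ≤ q.1 i} ≃
    {p : (Fin a.length → ℕ+) × (Fin (d.length + 1) → ℕ+) //
      (StrictMono p.1 ∧ Monotone p.2 ∧
        ∀ (i : Fin a.length) (j : Fin (d.length + 1)), i.1 = a.length - 1 → p.2 j ≤ p.1 i) ∧
      p.2 0 < p.1 ⟨0, h0⟩} where
  toFun q := ⟨(fun i => q.1.1 i.succ, fun j => Fin.cases (q.1.1 0) (fun j' => q.1.2 j') j), by
    obtain ⟨hs, hm, hc0, hcl⟩ := q.2
    refine ⟨⟨fun x y hxy => hs (Fin.succ_lt_succ_iff.mpr hxy), ?_, ?_⟩, ?_⟩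
    · show Monotone (fun j : Fin (d.length + 1) => (Fin.cases (q.1.1 0) (fun j' => q.1.2 j') j : ℕ+))
      intro j j' hjj
      induction j using Fin.cases with
      | zero =>
        induction j' using Fin.cases with
        | zero => exact le_rfl
        | succ j' =>
          beta_reduce
          rw [Fin.cases_zero, Fin.cases_succ]
          exact hc0 0 j' rfl
      | succ j =>
        induction j' using Fin.cases with
        | zero =>
          exact absurd hjj (by
            intro h
            simp only [Fin.le_def, Fin.val_succ, Fin.val_zero] at h
            omega)
        | succ j' =>
          beta_reduce
          rw [Fin.cases_succ, Fin.cases_succ]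
          exact hm (Fin.succ_le_succ_iff.mp hjj)
    · intro i j hi
      show (Fin.cases (q.1.1 0) (fun j' => q.1.2 j') j : ℕ+) ≤ q.1.1 i.succ
      have hisucc : i.succ = Fin.last (a.length) := by
        apply Fin.ext
        simp only [Fin.val_succ, Fin.val_last]
        omega
      rw [hisucc]
      induction j using Fin.cases with
      | zero =>
        rw [Fin.cases_zero]
        exact hs.monotone (Fin.le_def.mpr (Nat.zero_le _))
      | succ j' =>
        rw [Fin.cases_succ]
        exact hcl (Fin.last a.length) j' (by simp)
    · show (Fin.cases (q.1.1 0) (fun j' => q.1.2 j') (0 : Fin (d.length + 1)) : ℕ+) <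
        q.1.1 (Fin.succ ⟨0, h0⟩)
      rw [Fin.cases_zero]
      exact hs (by simp [Fin.lt_def])⟩
  invFun p := ⟨(fun i => Fin.cases (p.1.2 0) (fun i' => p.1.1 i') i, fun j => p.1.2 j.succ), by
    obtain ⟨⟨hs, hm, hcl⟩, hlt⟩ := p.2
    refine ⟨?_, fun x y hxy => hm (Fin.succ_le_succ_iff.mpr hxy), ?_, ?_⟩
    · show StrictMono (fun i : Fin (a.length + 1) => (Fin.cases (p.1.2 0) (fun i' => p.1.1 i') i : ℕ+))
      intro i i' hii
      induction i using Fin.cases with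
      | zero =>
        induction i' using Fin.cases with
        | zero => exact absurd hii (lt_irrefl _)
        | succ i' =>
          beta_reduce
          rw [Fin.cases_zero, Fin.cases_succ]
          exact lt_of_lt_of_le hlt (hs.monotone (Fin.le_def.mpr (Nat.zero_le _)))
      | succ i =>
        induction i' using Fin.cases with
        | zero =>
          exact absurd hii (by
            intro h
            simp only [Fin.lt_def, Fin.val_succ, Fin.val_zero] at h
            omega)
        | succ i' =>
          beta_reduce
          rw [Fin.cases_succ, Fin.cases_succ]
          exact hs (Fin.succ_lt_succ_iff.mp hii)
    · intro i j hi
      show (Fin.cases (p.1.2 0) (fun i' => p.1.1 i') i : ℕ+) ≤ p.1.2 j.succ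
      have hieq : i = (0 : Fin (a.length + 1)) := Fin.ext hi
      rw [hieq, Fin.cases_zero]
      exact hm (Fin.le_def.mpr (Nat.zero_le _))
    · intro i j hi
      show p.1.2 j.succ ≤ (Fin.cases (p.1.2 0) (fun i' => p.1.1 i') i : ℕ+)
      have hieq : i = Fin.succ ⟨a.length - 1, by omega⟩ := by
        apply Fin.ext
        simp only [Fin.val_succ]
        omega
      rw [hieq, Fin.cases_succ]
      exact hcl ⟨a.length - 1, by omega⟩ j.succ rfl⟩
  left_inv q := by
    apply Subtype.ext
    apply Prod.ext
    · funext i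
      induction i using Fin.cases with
      | zero => simp
      | succ i => simp
    · funext j
      simp
  right_inv p := by
    apply Subtype.ext
    apply Prod.ext
    · funext i
      simp
    · funext j
      induction j using Fin.cases with
      | zero => simp
      | succ j => simp

lemma ZU_split (c : ℕ) (a d : List ℕ) (ha : a ≠ []) (h1 : ∀ z ∈ a, 1 ≤ z) (hc : 1 ≤ c)
    (h2 : ∀ z ∈ d, 1 ≤ z) (hlast : 2 ≤ a.getLast ha) :
    ZU a (c :: d) = ZB a (c :: d) + ZB (c :: a) d := by
  have h0 : 0 < a.length := List.length_pos_iff.mpr ha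
  set γ := (Fin a.length → ℕ+) × (Fin (d.length + 1) → ℕ+) with hγ
  set F : γ → ℝ := fun p => (∏ i, (1 : ℝ) / ((p.1 i : ℕ) : ℝ) ^ a.get i) *
      ∏ j, (1 : ℝ) / ((p.2 j : ℕ) : ℝ) ^ (c :: d).get j with hF
  set S : Set γ := {p | StrictMono p.1 ∧ Monotone p.2 ∧
      ∀ (i : Fin a.length) (j : Fin (d.length + 1)), i.1 = a.length - 1 → p.2 j ≤ p.1 i} with hS
  set S1 : Set γ := {p | StrictMono p.1 ∧ Monotone p.2 ∧
      (∀ (i : Fin a.length) (j : Fin (d.length + 1)), i.1 = 0 → p.1 i ≤ p.2 j) ∧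
      ∀ (i : Fin a.length) (j : Fin (d.length + 1)), i.1 = a.length - 1 → p.2 j ≤ p.1 i} with hS1
  set S2 : Set γ := {p | (StrictMono p.1 ∧ Monotone p.2 ∧
      ∀ (i : Fin a.length) (j : Fin (d.length + 1)), i.1 = a.length - 1 → p.2 j ≤ p.1 i) ∧
      p.2 0 < p.1 ⟨0, h0⟩} with hS2
  have hFnn : ∀ p : γ, 0 ≤ F p := fun p => by
    apply mul_nonneg (Finset.prod_nonneg fun i _ => by positivity)
      (Finset.prod_nonneg fun j _ => by positivity)
  have hsub1 : S1 ⊆ S := fun p hp => ⟨hp.1, hp.2.1, hp.2.2.2⟩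
  have hsub2 : S2 ⊆ S := fun p hp => hp.1
  have hSeq : S = S1 ∪ S2 := by
    apply Set.ext
    intro p
    constructor
    · rintro ⟨hs, hm, hcl⟩
      rcases le_or_gt (p.1 ⟨0, h0⟩) (p.2 0) with hle | hlt
      · left
        refine ⟨hs, hm, fun i j hi => ?_, hcl⟩
        have hi0 : i = ⟨0, h0⟩ := Fin.ext hi
        rw [hi0]
        exact le_trans hle (hm (Fin.le_def.mpr (Nat.zero_le _)))
      · right
        exact ⟨⟨hs, hm, hcl⟩, hlt⟩
    · rintro (hp | hp)
      · exact hsub1 hp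
      · exact hsub2 hp
  have hdisj : Disjoint S1 S2 := by
    rw [Set.disjoint_left]
    rintro p hp1 hp2
    exact absurd (hp1.2.2.1 ⟨0, h0⟩ 0 rfl) (not_le.mpr hp2.2)
  have hSsum : Summable (F ∘ ((↑) : ↥S → γ)) :=
    summable_ZU a (c :: d) ha h1 (by
      intro z hz
      rcases List.mem_cons.mp hz with rfl | hz
      · exact hc
      · exact h2 z hz) hlast
  have hind : Summable (S.indicator F) := (summable_subtype_iff_indicator).mp hSsum
  have hS1sum : Summable (F ∘ ((↑) : ↥S1 → γ)) := by
    rw [summable_subtype_iff_indicator]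
    exact Summable.of_nonneg_of_le (fun p => Set.indicator_nonneg (fun q _ => hFnn q) p)
      (fun p => Set.indicator_le_indicator_of_subset hsub1 (fun q => hFnn q) p) hind
  have hS2sum : Summable (F ∘ ((↑) : ↥S2 → γ)) := by
    rw [summable_subtype_iff_indicator]
    exact Summable.of_nonneg_of_le (fun p => Set.indicator_nonneg (fun q _ => hFnn q) p)
      (fun p => Set.indicator_le_indicator_of_subset hsub2 (fun q => hFnn q) p) hind
  have main : ∑' x : ↥S, F x = (∑' x : ↥S1, F x) + ∑' x : ↥S2, F x := by
    rw [hSeq]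
    exact Summable.tsum_union_disjoint hdisj hS1sum hS2sum
  have step1 : ZU a (c :: d) = ∑' x : ↥S, F x := rfl
  have step2 : ZB a (c :: d) = ∑' x : ↥S1, F x := rfl
  have step3 : ZB (c :: a) d = ∑' x : ↥S2, F x := by
    have main2 : ∑' q : {q : (Fin (a.length + 1) → ℕ+) × (Fin d.length → ℕ+) //
        StrictMono q.1 ∧ Monotone q.2 ∧
        (∀ (i : Fin (a.length + 1)) (j : Fin d.length), i.1 = 0 → q.1 i ≤ q.2 j) ∧
        ∀ (i : Fin (a.length + 1)) (j : Fin d.length),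
          i.1 = (a.length + 1) - 1 → q.2 j ≤ q.1 i},
        ((∏ i : Fin (a.length + 1), (1 : ℝ) / ((q.1.1 i : ℕ) : ℝ) ^ (c :: a).get i) *
          ∏ j : Fin d.length, (1 : ℝ) / ((q.1.2 j : ℕ) : ℝ) ^ d.get j)
        = ∑' x : ↥S2, F x := by
      refine Eq.trans (tsum_congr ?_) (Equiv.tsum_eq (splitEquiv c a d h0) (fun x : ↥S2 => F ↑x))
      intro q
      rw [hF]
      show (∏ i : Fin (a.length + 1), (1 : ℝ) / ((q.1.1 i : ℕ) : ℝ) ^ (c :: a).get i) *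
          ∏ j : Fin d.length, (1 : ℝ) / ((q.1.2 j : ℕ) : ℝ) ^ d.get j
        = (∏ i : Fin a.length, (1 : ℝ) / ((q.1.1 i.succ : ℕ) : ℝ) ^ a.get i) *
          ∏ j : Fin (d.length + 1),
            (1 : ℝ) / (((Fin.cases (q.1.1 0) (fun j' => q.1.2 j') j : ℕ+) : ℕ) : ℝ) ^ (c :: d).get j
      rw [Fin.prod_univ_succ, Fin.prod_univ_succ (n := d.length)]
      have g1 : ∀ i : Fin a.length, ((c :: a).get i.succ) = a.get i := fun i => rfl
      have g2 : ∀ j : Fin d.length, ((c :: d).get j.succ) = d.get j := fun j => rfl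
      have g3 : ((c :: a).get (0 : Fin (a.length + 1))) = c := rfl
      have g4 : ((c :: d).get (0 : Fin (d.length + 1))) = c := rfl
      simp only [Fin.cases_zero, Fin.cases_succ, g1, g2, g3, g4]
      ring
    exact main2
  rw [step1, step2, step3, main]

/-- For a tuple `(α₁,…,α_r)` of positive integers with `α_r ≥ 2` and `1 ≤ m ≤ r-1`:
`Z_B(α_{m+1},…,α_r; α_m,…,α₁) = (-1)^m ζ(α₁,…,α_r) + ∑_{k=1}^m (-1)^{m-k} Z_U(α_{k+1},…,α_r; α_k,…,α₁)`. -/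
theorem ZB_eq_mz_add_sum_ZU (r m : ℕ) (a : Fin r → ℕ)
    (hpos : ∀ i, 1 ≤ a i) (hm1 : 1 ≤ m) (hmr : m ≤ r - 1)
    (har : 2 ≤ a ⟨r - 1, by omega⟩) :
    ZB (List.ofFn (fun i : Fin (r - m) => a ⟨m + i.1, by have := i.isLt; omega⟩))
       (List.ofFn (fun i : Fin m => a ⟨m - 1 - i.1, by omega⟩)) =
    (-1 : ℝ) ^ m * mz (List.ofFn a) +
      ∑ k : Fin m,
        (-1 : ℝ) ^ (m - (k.1 + 1)) *
          ZU (List.ofFn (fun i : Fin (r - (k.1 + 1)) =>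
                a ⟨k.1 + 1 + i.1, by have := i.isLt; omega⟩))
             (List.ofFn (fun i : Fin (k.1 + 1) =>
                a ⟨k.1 - i.1, by have := k.isLt; omega⟩)) := by
  have hr2 : 2 ≤ r := by omega
  -- helper list facts
  have hne : ∀ t : ℕ, ∀ ht : t ≤ r - 1,
      (List.ofFn (fun i : Fin (r - t) => a ⟨t + i.1, by have := i.isLt; omega⟩)) ≠ [] := by
    intro t ht h
    have := congrArg List.length h
    simp only [List.length_ofFn, List.length_nil] at this
    omega
  have hmem : ∀ t : ℕ, ∀ z ∈ (List.ofFn (fun i : Fin (r - t) => a ⟨t + i.1, by have := i.isLt; omega⟩)), 1 ≤ z := by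
    intro t z hz
    rw [List.mem_ofFn] at hz
    obtain ⟨i, rfl⟩ := hz
    exact hpos _
  have hmemB : ∀ t : ℕ, ∀ ht : t ≤ r, ∀ z ∈ (List.ofFn (fun i : Fin t => a ⟨t - 1 - i.1, by omega⟩)),
      1 ≤ z := by
    intro t ht z hz
    rw [List.mem_ofFn] at hz
    obtain ⟨i, rfl⟩ := hz
    exact hpos _
  have hgetlast : ∀ (t : ℕ) (ht : t ≤ r - 1),
      2 ≤ (List.ofFn (fun i : Fin (r - t) => a ⟨t + i.1, by have := i.isLt; omega⟩)).getLast (hne t ht) := by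
    intro t ht
    rw [List.getLast_eq_getElem]
    have hlen : (List.ofFn (fun i : Fin (r - t) => a ⟨t + i.1, by have := i.isLt; omega⟩)).length = r - t := by
      simp
    have h2 : (List.ofFn (fun i : Fin (r - t) => a ⟨t + i.1, by have := i.isLt; omega⟩)).length - 1 <
        r - t := by omega
    rw [List.getElem_ofFn]
    have : (⟨t + ((List.ofFn (fun i : Fin (r - t) => a ⟨t + i.1, by have := i.isLt; omega⟩)).length - 1),
        by omega⟩ : Fin r) = ⟨r - 1, by omega⟩ := by
      apply Fin.ext
      simp only
      omega
    rw [this]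
    exact har
  -- key induction
  have key : ∀ t : ℕ, ∀ htm : t ≤ m,
      ZB (List.ofFn (fun i : Fin (r - t) => a ⟨t + i.1, by have := i.isLt; omega⟩))
         (List.ofFn (fun i : Fin t => a ⟨t - 1 - i.1, by omega⟩)) =
      (-1 : ℝ) ^ t * mz (List.ofFn a) +
        ∑ k : Fin t,
          (-1 : ℝ) ^ (t - (k.1 + 1)) *
            ZU (List.ofFn (fun i : Fin (r - (k.1 + 1)) => a ⟨k.1 + 1 + i.1, by have := i.isLt; omega⟩))
               (List.ofFn (fun i : Fin (k.1 + 1) => a ⟨k.1 + 1 - 1 - i.1, by omega⟩)) := by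
    intro t
    induction t with
    | zero =>
      intro _
      have hA0 : (List.ofFn (fun i : Fin (r - 0) => a ⟨0 + i.1, by have := i.isLt; omega⟩)) = List.ofFn a := by
        apply List.ext_getElem
        · simp
        · intro i h1 h2
          simp only [List.getElem_ofFn]
          exact congrArg a (Fin.ext (by simp))
      have hB0 : (List.ofFn (fun i : Fin 0 => a ⟨0 - 1 - i.1, by omega⟩)) = [] := rfl
      rw [hA0, hB0, ZB_nil]
      simp
    | succ t ih =>
      intro ht1
      have ht : t ≤ m := by omega
      have htr : t + 1 ≤ r - 1 := by omega
      -- list identities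
      have lem1 : (List.ofFn (fun i : Fin (t + 1) => a ⟨t + 1 - 1 - i.1, by omega⟩)) =
          a ⟨t, by omega⟩ :: (List.ofFn (fun i : Fin t => a ⟨t - 1 - i.1, by omega⟩)) := by
        apply List.ext_getElem
        · simp
        · intro i h1 h2
          match i with
          | 0 =>
            simp only [List.getElem_ofFn, List.getElem_cons_zero]
            exact congrArg a (Fin.ext (by simp))
          | (j+1) =>
            simp only [List.getElem_ofFn, List.getElem_cons_succ]
            exact congrArg a (Fin.ext (by simp only; omega))
      have lem2 : a ⟨t, by omega⟩ ::
          (List.ofFn (fun i : Fin (r - (t + 1)) => a ⟨t + 1 + i.1, by have := i.isLt; omega⟩)) =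
          (List.ofFn (fun i : Fin (r - t) => a ⟨t + i.1, by have := i.isLt; omega⟩)) := by
        apply List.ext_getElem
        · simp
          omega
        · intro i h1 h2
          match i with
          | 0 =>
            simp only [List.getElem_ofFn, List.getElem_cons_zero]
            exact congrArg a (Fin.ext (by simp))
          | (j+1) =>
            simp only [List.getElem_ofFn, List.getElem_cons_succ]
            exact congrArg a (Fin.ext (by simp only; omega))
      have hsplit := ZU_split (a ⟨t, by omega⟩)
        (List.ofFn (fun i : Fin (r - (t + 1)) => a ⟨t + 1 + i.1, by have := i.isLt; omega⟩))
        (List.ofFn (fun i : Fin t => a ⟨t - 1 - i.1, by omega⟩))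
        (hne (t + 1) htr) (hmem (t + 1)) (hpos _) (hmemB t (by omega)) (hgetlast (t + 1) htr)
      have e1 : ZB (List.ofFn (fun i : Fin (r - (t + 1)) => a ⟨t + 1 + i.1, by have := i.isLt; omega⟩))
          (List.ofFn (fun i : Fin (t + 1) => a ⟨t + 1 - 1 - i.1, by omega⟩)) =
          ZU (List.ofFn (fun i : Fin (r - (t + 1)) => a ⟨t + 1 + i.1, by have := i.isLt; omega⟩))
            (List.ofFn (fun i : Fin (t + 1) => a ⟨t + 1 - 1 - i.1, by omega⟩)) -
          ZB (List.ofFn (fun i : Fin (r - t) => a ⟨t + i.1, by have := i.isLt; omega⟩))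
            (List.ofFn (fun i : Fin t => a ⟨t - 1 - i.1, by omega⟩)) := by
        rw [lem1, ← lem2, hsplit]
        ring
      rw [e1, ih ht]
      rw [Fin.sum_univ_castSucc]
      have hlastterm : (-1 : ℝ) ^ (t + 1 - ((Fin.last t).1 + 1)) *
          ZU (List.ofFn (fun i : Fin (r - ((Fin.last t).1 + 1)) =>
              a ⟨(Fin.last t).1 + 1 + i.1, by have := i.isLt; omega⟩))
            (List.ofFn (fun i : Fin ((Fin.last t).1 + 1) =>
              a ⟨(Fin.last t).1 + 1 - 1 - i.1, by omega⟩)) =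
          ZU (List.ofFn (fun i : Fin (r - (t + 1)) => a ⟨t + 1 + i.1, by have := i.isLt; omega⟩))
            (List.ofFn (fun i : Fin (t + 1) => a ⟨t + 1 - 1 - i.1, by omega⟩)) := by
        simp only [Fin.val_last, Nat.sub_self, pow_zero, one_mul]
      rw [hlastterm]
      have hsum : ∑ k : Fin t, (-1 : ℝ) ^ (t + 1 - ((k.castSucc).1 + 1)) *
          ZU (List.ofFn (fun i : Fin (r - ((k.castSucc).1 + 1)) =>
              a ⟨(k.castSucc).1 + 1 + i.1, by have := i.isLt; omega⟩))
            (List.ofFn (fun i : Fin ((k.castSucc).1 + 1) =>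
              a ⟨(k.castSucc).1 + 1 - 1 - i.1, by omega⟩)) =
          ∑ k : Fin t, -((-1 : ℝ) ^ (t - (k.1 + 1)) *
            ZU (List.ofFn (fun i : Fin (r - (k.1 + 1)) => a ⟨k.1 + 1 + i.1, by have := i.isLt; omega⟩))
              (List.ofFn (fun i : Fin (k.1 + 1) => a ⟨k.1 + 1 - 1 - i.1, by omega⟩))) := by
        apply Finset.sum_congr rfl
        intro k _
        have hk : k.1 < t := k.2
        have hexp : t + 1 - ((k.castSucc).1 + 1) = (t - (k.1 + 1)) + 1 := by
          simp only [Fin.coe_castSucc]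
          omega
        rw [hexp, pow_succ]
        show ((-1 : ℝ) ^ (t - (k.1 + 1)) * (-1)) *
            ZU (List.ofFn (fun i : Fin (r - (k.1 + 1)) => a ⟨k.1 + 1 + i.1, by have := i.isLt; omega⟩))
              (List.ofFn (fun i : Fin (k.1 + 1) => a ⟨k.1 + 1 - 1 - i.1, by omega⟩)) = _
        ring
      rw [hsum, Finset.sum_neg_distrib]
      rw [pow_succ]
      ring
  exact key m le_rfl
end

section
/- Let (α_1, …, α_r) be a tuple of integers with α_i ≥ 2 for all 1 ≤ i ≤ r, and let 1 ≤ m ≤ r − 1. Then Z_B(α_r, …, α_{m+1}; α_1, …, α_m) = (-1)^m · ζ(α_r, …, α_1) + ∑_{k=1}^{m} (-1)^{m-k} · Z_L(α_r, …, α_{k+1}; α_1, …, α_k). -/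
open scoped BigOperators

namespace ZBaux

noncomputable def trm {s k : ℕ} (A : Fin s → ℕ) (B : Fin k → ℕ)
    (p : (Fin s → ℕ+) × (Fin k → ℕ+)) : ℝ :=
  (∏ i, (1 : ℝ) / ((p.1 i : ℕ) : ℝ) ^ A i) * ∏ j, (1 : ℝ) / ((p.2 j : ℕ) : ℝ) ^ B j

lemma summable_single {e : ℕ} (he : 2 ≤ e) :
    Summable (fun x : ℕ+ => (1 : ℝ) / ((x : ℕ) : ℝ) ^ e) :=
  (Real.summable_one_div_nat_pow.mpr he).comp_injective PNat.coe_injective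

lemma prod_nonneg' {n : ℕ} (E : Fin n → ℕ) (x : Fin n → ℕ+) :
    0 ≤ ∏ i, (1 : ℝ) / ((x i : ℕ) : ℝ) ^ E i :=
  Finset.prod_nonneg fun i _ => by positivity

lemma summable_pi : ∀ {n : ℕ} (E : Fin n → ℕ), (∀ i, 2 ≤ E i) →
    Summable (fun x : Fin n → ℕ+ => ∏ i, (1 : ℝ) / ((x i : ℕ) : ℝ) ^ E i) := by
  intro n
  induction n with
  | zero => intro E _; exact (hasSum_fintype _).summable
  | succ n ih =>
    intro E hE
    have h1 := summable_single (hE 0)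
    have h2 := ih (fun i => E i.succ) (fun i => hE i.succ)
    have h3 := h1.mul_of_nonneg h2 (fun x => by positivity)
      (fun x => prod_nonneg' _ x)
    refine ((Fin.consEquiv (fun _ : Fin (n+1) => ℕ+)).summable_iff).mp
      (h3.congr fun q => ?_)
    simp [Fin.prod_univ_succ, mul_comm]

lemma trm_nonneg {s k : ℕ} (A : Fin s → ℕ) (B : Fin k → ℕ) (p) :
    0 ≤ trm A B p := mul_nonneg (prod_nonneg' _ _) (prod_nonneg' _ _)

lemma summable_trm {s k : ℕ} (A : Fin s → ℕ) (B : Fin k → ℕ)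
    (hA : ∀ i, 2 ≤ A i) (hB : ∀ j, 2 ≤ B j) : Summable (trm A B) :=
  ((summable_pi A hA).mul_of_nonneg (summable_pi B hB)
    (fun x => prod_nonneg' _ _) (fun x => prod_nonneg' _ _)).congr fun p => rfl


def SL (s k : ℕ) : Set ((Fin s → ℕ+) × (Fin k → ℕ+)) :=
  {p | StrictMono p.1 ∧ Monotone p.2 ∧
    ∀ (i : Fin s) (j : Fin k), i.1 = 0 → p.1 i ≤ p.2 j}

def SB (s k : ℕ) : Set ((Fin s → ℕ+) × (Fin k → ℕ+)) :=
  {p | StrictMono p.1 ∧ Monotone p.2 ∧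
    (∀ (i : Fin s) (j : Fin k), i.1 = 0 → p.1 i ≤ p.2 j) ∧
    ∀ (i : Fin s) (j : Fin k), i.1 = s - 1 → p.2 j ≤ p.1 i}

noncomputable def zL {s k : ℕ} (A : Fin s → ℕ) (B : Fin k → ℕ) : ℝ :=
  ∑' p : SL s k, trm A B p

noncomputable def zB {s k : ℕ} (A : Fin s → ℕ) (B : Fin k → ℕ) : ℝ :=
  ∑' p : SB s k, trm A B p

noncomputable def mm {n : ℕ} (E : Fin n → ℕ) : ℝ :=
  ∑' f : {f : Fin n → ℕ+ // StrictMono f}, ∏ i, (1 : ℝ) / ((f.1 i : ℕ) : ℝ) ^ E i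

lemma snoc_strictMono {n : ℕ} {f : Fin n → ℕ+} {x : ℕ+}
    (hf : StrictMono f) (hx : ∀ i, f i < x) : StrictMono (Fin.snoc f x) := by
  intro i j hij
  rcases Fin.eq_castSucc_or_eq_last j with ⟨j', rfl⟩ | rfl
  · rcases Fin.eq_castSucc_or_eq_last i with ⟨i', rfl⟩ | rfl
    · simpa using hf (by simpa using hij)
    · exact absurd hij (by simp [Fin.lt_def]; try omega)
  · rcases Fin.eq_castSucc_or_eq_last i with ⟨i', rfl⟩ | rfl
    · simpa using hx i'
    · simp at hij

lemma snoc_monotone {n : ℕ} {f : Fin n → ℕ+} {x : ℕ+}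
    (hf : Monotone f) (hx : ∀ i, f i ≤ x) : Monotone (Fin.snoc f x) := by
  intro i j hij
  rcases Fin.eq_castSucc_or_eq_last j with ⟨j', rfl⟩ | rfl
  · rcases Fin.eq_castSucc_or_eq_last i with ⟨i', rfl⟩ | rfl
    · simpa using hf (by simpa using hij)
    · exact absurd hij (by simp [Fin.le_def]; try omega)
  · rcases Fin.eq_castSucc_or_eq_last i with ⟨i', rfl⟩ | rfl
    · simpa using hx i'
    · simp

def SC (s k : ℕ) : Set ((Fin (s+1) → ℕ+) × (Fin (k+1) → ℕ+)) :=
  {p | p ∈ SL (s+1) (k+1) ∧ p.1 (Fin.last s) < p.2 (Fin.last k)}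

lemma SB_eq' (s k : ℕ) :
    SB (s+1) (k+1) = {p | p ∈ SL (s+1) (k+1) ∧ p.2 (Fin.last k) ≤ p.1 (Fin.last s)} := by
  ext p
  constructor
  · rintro ⟨h1, h2, h3, h4⟩
    exact ⟨⟨h1, h2, h3⟩, h4 (Fin.last s) (Fin.last k) rfl⟩
  · rintro ⟨⟨h1, h2, h3⟩, h4⟩
    refine ⟨h1, h2, h3, fun i j hi => ?_⟩
    have : i = Fin.last s := Fin.ext (by simpa using hi)
    subst this
    exact le_trans (h2 (Fin.le_last j)) h4

lemma SL_union (s k : ℕ) : SL (s+1) (k+1) = SB (s+1) (k+1) ∪ SC s k := by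
  rw [SB_eq']
  ext p
  constructor
  · intro hp
    rcases le_or_gt (p.2 (Fin.last k)) (p.1 (Fin.last s)) with h | h
    · exact Or.inl ⟨hp, h⟩
    · exact Or.inr ⟨hp, h⟩
  · rintro (⟨hp, _⟩ | ⟨hp, _⟩) <;> exact hp

lemma SB_SC_disjoint (s k : ℕ) : Disjoint (SB (s+1) (k+1)) (SC s k) := by
  rw [SB_eq', Set.disjoint_left]
  rintro p ⟨_, h1⟩ ⟨_, h2⟩
  exact absurd h1 (not_le.mpr h2)

def EE (s k : ℕ) : ↥(SC s k) ≃ ↥(SB (s+2) k) where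
  toFun p := ⟨(Fin.snoc p.1.1 (p.1.2 (Fin.last k)), fun j => p.1.2 j.castSucc), by
    obtain ⟨⟨f, l⟩, ⟨hsm, hmon, h0⟩, hlt⟩ := p
    dsimp only
    refine ⟨snoc_strictMono hsm (fun i => lt_of_le_of_lt (hsm.monotone (Fin.le_last i)) hlt),
      fun i j hij => hmon (by simpa using hij), fun i j hi => ?_, fun i j hi => ?_⟩
    · have : i = Fin.castSucc 0 := Fin.ext (by simpa using hi)
      subst this
      simpa [Fin.snoc] using h0 0 j.castSucc rfl
    · have : i = Fin.last (s+1) := Fin.ext (by simpa using hi)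
      subst this
      simpa using hmon (Fin.le_last j.castSucc)⟩
  invFun q := ⟨(fun i => q.1.1 i.castSucc, Fin.snoc q.1.2 (q.1.1 (Fin.last (s+1)))), by
    obtain ⟨⟨g, t⟩, hsm, hmon, h0, hE⟩ := q
    dsimp only
    refine ⟨⟨fun i j hij => hsm (by simpa using hij),
      snoc_monotone hmon (fun j => hE (Fin.last (s+1)) j rfl), fun i j hi => ?_⟩, ?_⟩
    · have : i = 0 := Fin.ext (by simpa using hi)
      subst this
      rcases Fin.eq_castSucc_or_eq_last j with ⟨j', rfl⟩ | rfl
      · simpa using h0 (Fin.castSucc 0) j' rfl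
      · simpa using (hsm.monotone (Fin.le_last ((0:Fin (s+1)).castSucc)))
    · simpa using hsm (Fin.castSucc_lt_last (Fin.last s))⟩
  left_inv p := by
    obtain ⟨⟨f, l⟩, hp⟩ := p
    refine Subtype.ext (Prod.ext ?_ ?_)
    · funext i
      simp
    · funext j
      rcases Fin.eq_castSucc_or_eq_last j with ⟨j', rfl⟩ | rfl <;> simp
  right_inv q := by
    obtain ⟨⟨g, t⟩, hq⟩ := q
    refine Subtype.ext (Prod.ext ?_ ?_)
    · funext i
      rcases Fin.eq_castSucc_or_eq_last i with ⟨i', rfl⟩ | rfl <;> simp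
    · funext j
      simp

lemma key (s k : ℕ) (A : Fin (s+1) → ℕ) (B : Fin (k+1) → ℕ)
    (hA : ∀ i, 2 ≤ A i) (hB : ∀ j, 2 ≤ B j) :
    zL A B = zB A B +
      zB (Fin.snoc A (B (Fin.last k))) (fun j : Fin k => B j.castSucc) := by
  have hsum := summable_trm A B hA hB
  rw [zL, SL_union s k,
    Summable.tsum_union_disjoint (SB_SC_disjoint s k) (hsum.subtype _) (hsum.subtype _)]
  congr 1
  rw [zB, ← Equiv.tsum_eq (EE s k) (fun q => trm (Fin.snoc A (B (Fin.last k)))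
    (fun j : Fin k => B j.castSucc) q)]
  refine tsum_congr fun p => ?_
  simp only [EE, Equiv.coe_fn_mk, trm, Fin.prod_univ_castSucc, Fin.snoc_castSucc, Fin.snoc_last]
  ring

lemma zL_congr {s s' k k' : ℕ} (hs : s = s') (hk : k = k')
    {A : Fin s → ℕ} {A' : Fin s' → ℕ} {B : Fin k → ℕ} {B' : Fin k' → ℕ}
    (hA : ∀ i : Fin s', A' i = A (Fin.cast hs.symm i))
    (hB : ∀ j : Fin k', B' j = B (Fin.cast hk.symm j)) : zL A B = zL A' B' := by
  subst hs; subst hk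
  have hA' : A' = A := funext fun i => hA i
  have hB' : B' = B := funext fun j => hB j
  rw [hA', hB']

lemma zB_congr {s s' k k' : ℕ} (hs : s = s') (hk : k = k')
    {A : Fin s → ℕ} {A' : Fin s' → ℕ} {B : Fin k → ℕ} {B' : Fin k' → ℕ}
    (hA : ∀ i : Fin s', A' i = A (Fin.cast hs.symm i))
    (hB : ∀ j : Fin k', B' j = B (Fin.cast hk.symm j)) : zB A B = zB A' B' := by
  subst hs; subst hk
  have hA' : A' = A := funext fun i => hA i
  have hB' : B' = B := funext fun j => hB j
  rw [hA', hB']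

lemma mm_congr {n n' : ℕ} (hn : n = n') {E : Fin n → ℕ} {E' : Fin n' → ℕ}
    (hE : ∀ i : Fin n', E' i = E (Fin.cast hn.symm i)) : mm E = mm E' := by
  subst hn
  have : E' = E := funext fun i => hE i
  rw [this]

def e0 (n : ℕ) : {f : Fin n → ℕ+ // StrictMono f} ≃ ↥(SB n 0) where
  toFun f := ⟨(f.1, Fin.elim0), f.2, fun i j _ => j.elim0,
      fun i j => j.elim0, fun i j => j.elim0⟩
  invFun q := ⟨q.1.1, q.2.1⟩
  left_inv f := rfl
  right_inv q := Subtype.ext (Prod.ext rfl (funext fun j => j.elim0))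

lemma zB_nil {n : ℕ} (E : Fin n → ℕ) (B : Fin 0 → ℕ) : zB E B = mm E := by
  rw [zB, mm, ← Equiv.tsum_eq (e0 n) (fun q => trm E B q)]
  refine tsum_congr fun f => ?_
  simp only [trm, Finset.univ_eq_empty, Finset.prod_empty, mul_one]
  rfl

lemma a_congr {r : ℕ} (a : Fin r → ℕ) {x y : ℕ} (hx : x < r) (hy : y < r)
    (h : x = y) : a ⟨x, hx⟩ = a ⟨y, hy⟩ := by subst h; rfl

lemma aux (r : ℕ) (a : Fin r → ℕ) (hge : ∀ i, 2 ≤ a i) (hr : 2 ≤ r) :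
    ∀ m : ℕ, 1 ≤ m → m ≤ r - 1 →
      zB (fun i : Fin (r - m) => a ⟨r - 1 - i.1, by omega⟩)
         (fun i : Fin m => a ⟨min i.1 (r - 1), by omega⟩) =
      (-1 : ℝ) ^ m * mm (fun i : Fin r => a ⟨r - 1 - i.1, by omega⟩) +
        ∑ k : Fin m, (-1 : ℝ) ^ (m - (k.1 + 1)) *
          zL (fun i : Fin (r - (k.1 + 1)) => a ⟨r - 1 - i.1, by omega⟩)
             (fun i : Fin (k.1 + 1) => a ⟨min i.1 (r - 1), by omega⟩) := by
  intro m
  induction m with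
  | zero => intro h1 _; exact absurd h1 (by omega)
  | succ m' ih =>
    intro _ hmr
    have hr2 : m' + 2 ≤ r := by omega
    have hs : r - (m' + 1) = (r - (m' + 2)) + 1 := by omega
    set A : Fin ((r - (m' + 2)) + 1) → ℕ := fun i => a ⟨r - 1 - i.1, by omega⟩ with hAdef
    set B : Fin (m' + 1) → ℕ := fun i => a ⟨min i.1 (r - 1), by omega⟩ with hBdef
    have hkey := key (r - (m' + 2)) m' A B (fun i => hge _) (fun j => hge _)
    have hL : zB (fun i : Fin (r - (m' + 1)) => a ⟨r - 1 - i.1, by omega⟩)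
        (fun i : Fin (m' + 1) => a ⟨min i.1 (r - 1), by omega⟩) = zB A B :=
      zB_congr hs rfl (fun i => rfl) (fun j => rfl)
    have hzL : zL A B = zL (fun i : Fin (r - (m' + 1)) => a ⟨r - 1 - i.1, by omega⟩)
        (fun i : Fin (m' + 1) => a ⟨min i.1 (r - 1), by omega⟩) :=
      zL_congr hs.symm rfl (fun i => rfl) (fun j => rfl)
    -- the snoc'd zB term
    have hsnoc : ∀ i : Fin (r - m'),
        (fun i : Fin (r - m') => a ⟨r - 1 - i.1, by omega⟩) i =
        (Fin.snoc A (B (Fin.last m')) : Fin ((r - (m' + 2)) + 2) → ℕ)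
          (Fin.cast (show r - m' = (r - (m' + 2)) + 2 by omega) i) := by
      intro i
      rcases Fin.eq_castSucc_or_eq_last
        (Fin.cast (show r - m' = (r - (m' + 2)) + 2 by omega) i) with ⟨j, hj⟩ | hj
      · rw [hj, Fin.snoc_castSucc]
        have hv : j.1 = i.1 := by
          have := congrArg Fin.val hj
          simpa using this.symm
        exact a_congr a _ _ (by omega)
      · rw [hj, Fin.snoc_last]
        have hv : i.1 = (r - (m' + 2)) + 1 := by
          have := congrArg Fin.val hj
          simpa using this
        show _ = a ⟨min (Fin.last m').1 (r - 1), _⟩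
        exact a_congr a _ _ (by simp [Fin.last]; omega)
    have hB2 : zB (Fin.snoc A (B (Fin.last m'))) (fun j : Fin m' => B j.castSucc) =
        zB (fun i : Fin (r - m') => a ⟨r - 1 - i.1, by omega⟩)
           (fun i : Fin m' => a ⟨min i.1 (r - 1), by omega⟩) :=
      zB_congr (show (r - (m' + 2)) + 2 = r - m' by omega) rfl
        (fun i => hsnoc i) (fun j => rfl)
    rw [hL]
    have hmain : zB A B = zL A B -
        zB (Fin.snoc A (B (Fin.last m'))) (fun j : Fin m' => B j.castSucc) := by
      linarith [hkey]
    rw [hmain, hzL, hB2]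
    rcases Nat.eq_zero_or_pos m' with hm0 | hm0
    · subst hm0
      rw [zB_nil]
      have hmm : mm (fun i : Fin (r - 0) => a ⟨r - 1 - i.1, by omega⟩) =
          mm (fun i : Fin r => a ⟨r - 1 - i.1, by omega⟩) :=
        mm_congr (show r - 0 = r by omega) (fun i => rfl)
      rw [hmm, Fin.sum_univ_one]
      show _ = _ + (-1 : ℝ) ^ (0 + 1 - ((0 : ℕ) + 1)) *
        zL (fun i : Fin (r - ((0 : ℕ) + 1)) => a ⟨r - 1 - i.1, by omega⟩)
           (fun i : Fin ((0 : ℕ) + 1) => a ⟨min i.1 (r - 1), by omega⟩)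
      norm_num
      ring
    · rw [ih hm0 (by omega)]
      rw [Fin.sum_univ_castSucc]
      have hlast : (-1 : ℝ) ^ ((m' + 1) - ((Fin.last m').1 + 1)) *
          zL (fun i : Fin (r - ((Fin.last m').1 + 1)) => a ⟨r - 1 - i.1, by omega⟩)
             (fun i : Fin ((Fin.last m').1 + 1) => a ⟨min i.1 (r - 1), by omega⟩) =
          zL (fun i : Fin (r - (m' + 1)) => a ⟨r - 1 - i.1, by omega⟩)
             (fun i : Fin (m' + 1) => a ⟨min i.1 (r - 1), by omega⟩) := by
        show (-1 : ℝ) ^ ((m' + 1) - (m' + 1)) *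
          zL (fun i : Fin (r - (m' + 1)) => a ⟨r - 1 - i.1, by omega⟩)
             (fun i : Fin (m' + 1) => a ⟨min i.1 (r - 1), by omega⟩) = _
        rw [Nat.sub_self, pow_zero, one_mul]
      rw [hlast]
      have hcast : ∀ k : Fin m',
          (-1 : ℝ) ^ ((m' + 1) - ((Fin.castSucc k).1 + 1)) *
            zL (fun i : Fin (r - ((Fin.castSucc k).1 + 1)) => a ⟨r - 1 - i.1, by omega⟩)
               (fun i : Fin ((Fin.castSucc k).1 + 1) => a ⟨min i.1 (r - 1), by omega⟩) =
          (-1 : ℝ) * ((-1 : ℝ) ^ (m' - (k.1 + 1)) *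
            zL (fun i : Fin (r - (k.1 + 1)) => a ⟨r - 1 - i.1, by omega⟩)
               (fun i : Fin (k.1 + 1) => a ⟨min i.1 (r - 1), by omega⟩)) := by
        intro k
        show (-1 : ℝ) ^ ((m' + 1) - (k.1 + 1)) *
            zL (fun i : Fin (r - (k.1 + 1)) => a ⟨r - 1 - i.1, by omega⟩)
               (fun i : Fin (k.1 + 1) => a ⟨min i.1 (r - 1), by omega⟩) =
          (-1 : ℝ) * ((-1 : ℝ) ^ (m' - (k.1 + 1)) *
            zL (fun i : Fin (r - (k.1 + 1)) => a ⟨r - 1 - i.1, by omega⟩)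
               (fun i : Fin (k.1 + 1) => a ⟨min i.1 (r - 1), by omega⟩))
        rw [show (m' + 1) - (k.1 + 1) = (m' - (k.1 + 1)) + 1 from by omega, pow_succ]
        ring
      rw [Finset.sum_congr rfl (fun k _ => hcast k), ← Finset.mul_sum]
      rw [pow_succ]
      ring

lemma ZL_eq (a b : List ℕ) : ZL a b = zL a.get b.get := rfl
lemma ZB_eq (a b : List ℕ) : ZB a b = zB a.get b.get := rfl
lemma mz_eq (a : List ℕ) : mz a = mm a.get := rfl

end ZBaux

/-- For a tuple `(α₁,…,α_r)` with `αᵢ ≥ 2` for all `i` and `1 ≤ m ≤ r-1`: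
`Z_B(α_r,…,α_{m+1}; α₁,…,α_m) = (-1)^m ζ(α_r,…,α₁) + ∑_{k=1}^m (-1)^{m-k} Z_L(α_r,…,α_{k+1}; α₁,…,α_k)`. -/
theorem ZB_eq_mz_add_sum_ZL (r m : ℕ) (a : Fin r → ℕ)
    (hge : ∀ i, 2 ≤ a i) (hm1 : 1 ≤ m) (hmr : m ≤ r - 1) :
    ZB (List.ofFn (fun i : Fin (r - m) => a ⟨r - 1 - i.1, by omega⟩))
       (List.ofFn (fun i : Fin m => a ⟨i.1, by have := i.isLt; omega⟩)) =
    (-1 : ℝ) ^ m * mz (List.ofFn (fun i : Fin r => a ⟨r - 1 - i.1, by omega⟩)) +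
      ∑ k : Fin m,
        (-1 : ℝ) ^ (m - (k.1 + 1)) *
          ZL (List.ofFn (fun i : Fin (r - (k.1 + 1)) =>
                a ⟨r - 1 - i.1, by omega⟩))
             (List.ofFn (fun i : Fin (k.1 + 1) =>
                a ⟨i.1, by have := i.isLt; have := k.isLt; omega⟩)) := by
  have hr : 2 ≤ r := by omega
  have main := ZBaux.aux r a hge hr m hm1 hmr
  have h1 : ZB (List.ofFn (fun i : Fin (r - m) => a ⟨r - 1 - i.1, by omega⟩))
      (List.ofFn (fun i : Fin m => a ⟨i.1, by have := i.isLt; omega⟩)) =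
      ZBaux.zB (fun i : Fin (r - m) => a ⟨r - 1 - i.1, by omega⟩)
        (fun i : Fin m => a ⟨min i.1 (r - 1), by omega⟩) := by
    rw [ZBaux.ZB_eq]
    refine ZBaux.zB_congr List.length_ofFn List.length_ofFn
      (fun i => ?_) (fun j => ?_)
    · rw [List.get_ofFn]
      rfl
    · rw [List.get_ofFn]
      exact ZBaux.a_congr a _ _ (by have := j.isLt; simp; omega)
  have h2 : mz (List.ofFn (fun i : Fin r => a ⟨r - 1 - i.1, by omega⟩)) =
      ZBaux.mm (fun i : Fin r => a ⟨r - 1 - i.1, by omega⟩) := by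
    rw [ZBaux.mz_eq]
    exact ZBaux.mm_congr List.length_ofFn (fun i => by rw [List.get_ofFn]; rfl)
  have h3 : ∀ k : Fin m,
      ZL (List.ofFn (fun i : Fin (r - (k.1 + 1)) => a ⟨r - 1 - i.1, by omega⟩))
         (List.ofFn (fun i : Fin (k.1 + 1) =>
            a ⟨i.1, by have := i.isLt; have := k.isLt; omega⟩)) =
      ZBaux.zL (fun i : Fin (r - (k.1 + 1)) => a ⟨r - 1 - i.1, by omega⟩)
        (fun i : Fin (k.1 + 1) => a ⟨min i.1 (r - 1), by omega⟩) := by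
    intro k
    rw [ZBaux.ZL_eq]
    refine ZBaux.zL_congr List.length_ofFn List.length_ofFn
      (fun i => ?_) (fun j => ?_)
    · rw [List.get_ofFn]
      rfl
    · rw [List.get_ofFn]
      exact ZBaux.a_congr a _ _ (by have := j.isLt; have := k.isLt; simp; omega)
  rw [h1, main, h2]
  congr 1
  exact Finset.sum_congr rfl (fun k _ => by rw [h3 k])
end
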